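/- arXiv:1810.09070 — 6 statements merged into one kernel-verified Lean document; each statement's English description precedes it below -/
import Mathlib

section
/- Fix α ∈ (0,1), ε ∈ (0,1], and a probability vector p = (p_i)_{i≥1} on the positive integers with p_1 ≥ p_2 ≥ p_3 ≥ ⋯. Let i* be the least integer such that ∑_{i=1}^{i*} p_i ≥ 1−ε, and define q*_i = p_i for i < i*, q*_{i*} = 1 − ε − ∑_{i<i*} p_i, and q*_i = 0 for i > i*. Then ∑_{i=1}^∞ (q*_i)^α = inf { ∑_{i=1}^∞ q_i^α : 0 ≤ q_i ≤ p_i for all i, ∑_i q_i ≥ 1−ε }. -/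
open scoped ENNReal
open MeasureTheory

private lemma auxC {p : ℕ → ℝ} (hpa : Antitone p) :
    ∀ A : Finset ℕ, ∑ i ∈ A, p i ≤ ∑ i ∈ Finset.range A.card, p i := by
  intro A
  induction A using Finset.strongInduction with
  | _ A ih =>
    rcases A.eq_empty_or_nonempty with rfl | hne
    · simp
    · set M := A.max' hne with hMdef
      have hM : M ∈ A := A.max'_mem hne
      have hsub : A.erase M ⊂ A := Finset.erase_ssubset hM
      have hcard : (A.erase M).card = A.card - 1 := Finset.card_erase_of_mem hM
      have hpos : 0 < A.card := Finset.card_pos.mpr hne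
      have hMge : A.card - 1 ≤ M := by
        have hsubset : A ⊆ Finset.range (M + 1) := by
          intro a ha
          simpa [Finset.mem_range, Nat.lt_succ_iff] using A.le_max' a ha
        have := Finset.card_le_card hsubset
        simp only [Finset.card_range] at this
        exact Nat.sub_le_iff_le_add.mpr this
      have e1 : p M + ∑ i ∈ A.erase M, p i = ∑ i ∈ A, p i :=
        Finset.add_sum_erase _ _ hM
      have e2 : ∑ i ∈ Finset.range A.card, p i
          = ∑ i ∈ Finset.range (A.card - 1), p i + p (A.card - 1) := by
        have hcc : A.card - 1 + 1 = A.card := Nat.succ_pred_eq_of_pos hpos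
        conv_lhs => rw [← hcc]
        rw [Finset.sum_range_succ]
      have h3 := ih _ hsub
      rw [hcard] at h3
      have h4 : p M ≤ p (A.card - 1) := hpa hMge
      linarith

private lemma auxB {p q : ℕ → ℝ} (hp0 : ∀ i, 0 ≤ p i) (hpa : Antitone p)
    (hps : Summable p) (hq : ∀ i, 0 ≤ q i ∧ q i ≤ p i)
    (n : ℕ) {c : ℝ} (hc0 : 0 ≤ c) (hcp : c ≤ p n)
    (hmass : ∑ i ∈ Finset.range n, p i + c ≤ ∑' i, q i)
    {u : ℝ} (hu : 0 < u) :
    ∑ i ∈ Finset.range n, min (p i) u + min c u ≤ ∑' i, min (q i) u := by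
  have hqs : Summable q := hps.of_nonneg_of_le (fun i => (hq i).1) (fun i => (hq i).2)
  have hmins : Summable (fun i => min (q i) u) :=
    hqs.of_nonneg_of_le (fun i => le_min (hq i).1 hu.le) (fun i => min_le_left _ _)
  rcases le_or_gt (p n) u with hun | hun
  · -- u is at least p n
    have hg : Summable (fun i => max (p i - u) 0) :=
      hps.of_nonneg_of_le (fun i => le_max_right _ _)
        (fun i => max_le (by linarith [hu, hp0 i]) (hp0 i))
    have hpt : ∀ i, q i - max (p i - u) 0 ≤ min (q i) u := by
      intro i
      rcases le_or_gt (q i) u with h | h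
      · have h2 := le_max_right (p i - u) 0
        rw [min_eq_left h]; linarith
      · have h2 : q i ≤ p i := (hq i).2
        rw [min_eq_right h.le, max_eq_left (by linarith)]
        linarith
    have h1 : ∑' i, (q i - max (p i - u) 0) ≤ ∑' i, min (q i) u :=
      Summable.tsum_le_tsum hpt (hqs.sub hg) hmins
    rw [Summable.tsum_sub hqs hg] at h1
    have h2 : ∑' i, max (p i - u) 0 = ∑ i ∈ Finset.range n, max (p i - u) 0 := by
      refine tsum_eq_sum ?_
      intro i hi
      have hni : n ≤ i := by
        by_contra h
        exact hi (Finset.mem_range.mpr (by omega))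
      have : p i ≤ p n := hpa hni
      rw [max_eq_right (by linarith)]
    have hminc : min c u = c := min_eq_left (hcp.trans hun)
    have hminp : ∀ i, min (p i) u = p i - max (p i - u) 0 := by
      intro i
      rcases le_total (p i) u with h | h
      · rw [min_eq_left h, max_eq_right (by linarith)]; ring
      · rw [min_eq_right h, max_eq_left (by linarith)]; ring
    have e3 : ∑ i ∈ Finset.range n, min (p i) u
        = ∑ i ∈ Finset.range n, p i - ∑ i ∈ Finset.range n, max (p i - u) 0 := by
      rw [← Finset.sum_sub_distrib]
      exact Finset.sum_congr rfl fun i _ => hminp i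
    rw [h2] at h1
    linarith
  · -- u < p n
    have hfin : {i : ℕ | u ≤ q i}.Finite := by
      have h0 := hqs.tendsto_atTop_zero
      have hev : ∀ᶠ i in Filter.atTop, q i < u := h0.eventually_lt_const hu
      obtain ⟨N, hN⟩ := Filter.eventually_atTop.mp hev
      refine (Set.finite_Iio N).subset ?_
      intro i hi
      simp only [Set.mem_Iio]
      by_contra h
      push_neg at h
      exact absurd hi.out (not_le.mpr (hN i h))
    set A := hfin.toFinset with hA
    have hAmem : ∀ i, i ∈ A ↔ u ≤ q i := by
      intro i; simp [hA, Set.Finite.mem_toFinset]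
    have hsumA : ∑ i ∈ A, min (q i) u = (A.card : ℝ) * u := by
      rw [Finset.sum_congr rfl (fun i hi => min_eq_right ((hAmem i).1 hi))]
      simp [Finset.sum_const, nsmul_eq_mul]
    have htarget1 : ∑ i ∈ Finset.range n, min (p i) u ≤ (n : ℝ) * u := by
      have := Finset.sum_le_card_nsmul (Finset.range n) (fun i => min (p i) u) u
        (fun i _ => min_le_right _ _)
      simpa [Finset.card_range, nsmul_eq_mul] using this
    rcases le_or_gt A.card n with hAn | hAn
    · -- few large terms
      have hsplit_min := Summable.sum_add_tsum_subtype_compl hmins A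
      have hsplit_q := Summable.sum_add_tsum_subtype_compl hqs A
      have hTeq : ∑' (i : {x : ℕ // x ∉ A}), min (q ↑i) u = ∑' (i : {x : ℕ // x ∉ A}), q ↑i := by
        refine tsum_congr fun i => ?_
        have : ¬ u ≤ q ↑i := fun h => i.2 ((hAmem ↑i).2 h)
        exact min_eq_left (le_of_not_ge this)
      have hAq : ∑ i ∈ A, q i ≤ ∑ i ∈ Finset.range A.card, p i :=
        le_trans (Finset.sum_le_sum fun i _ => (hq i).2) (auxC hpa A)
      have hIco : ∑ i ∈ Finset.Ico A.card n, p i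
          = ∑ i ∈ Finset.range n, p i - ∑ i ∈ Finset.range A.card, p i :=
        Finset.sum_Ico_eq_sub _ hAn
      have hIco_ge : ((n - A.card : ℕ) : ℝ) * u ≤ ∑ i ∈ Finset.Ico A.card n, p i := by
        have hcard : (Finset.Ico A.card n).card = n - A.card := Nat.card_Ico _ _
        have := Finset.card_nsmul_le_sum (Finset.Ico A.card n) p u
          (fun i hi => by
            have hin : i ≤ n := le_of_lt (Finset.mem_Ico.mp hi).2
            exact le_trans hun.le (hpa hin))
        rw [hcard] at this
        simpa [nsmul_eq_mul] using this
      have hcast : ((n - A.card : ℕ) : ℝ) = (n : ℝ) - (A.card : ℝ) := by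
        exact Nat.cast_sub hAn
      have hmincu : min c u ≤ c := min_le_left _ _
      rw [hcast] at hIco_ge
      linarith
    · -- many large terms
      have hsum_le : ∑ i ∈ A, min (q i) u ≤ ∑' i, min (q i) u :=
        Summable.sum_le_tsum A (fun i _ => le_min (hq i).1 hu.le) hmins
      have hge : ((n : ℝ) + 1) * u ≤ (A.card : ℝ) * u := by
        have : ((n : ℝ) + 1) ≤ (A.card : ℝ) := by exact_mod_cast hAn
        exact mul_le_mul_of_nonneg_right this hu.le
      have hmincu : min c u ≤ u := min_le_right _ _
      linarith

private lemma auxA {α : ℝ} (h0 : 0 < α) (h1 : α < 1) {x : ℝ} (hx : 0 ≤ x) :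
    ∫⁻ u in Set.Ioi (0:ℝ), ENNReal.ofReal (min x u * u ^ (α - 2)) =
      ENNReal.ofReal (x ^ α) * ENNReal.ofReal (α⁻¹ + (1 - α)⁻¹) := by
  rcases eq_or_lt_of_le hx with rfl | hx
  · have h : ∀ u ∈ Set.Ioi (0:ℝ),
        ENNReal.ofReal (min 0 u * u ^ (α - 2)) = (0 : ℝ≥0∞) := by
      intro u hu
      rw [min_eq_left (le_of_lt hu)]
      simp
    rw [setLIntegral_congr_fun measurableSet_Ioi h]
    simp [Real.zero_rpow h0.ne']
  · have hne1 : (1:ℝ) - α ≠ 0 := by linarith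
    have hne1' : α - 1 ≠ 0 := by linarith
    have hxpow : x * x ^ (α - 1) = x ^ α := by
      have h := (Real.rpow_add hx 1 (α - 1)).symm
      rw [Real.rpow_one] at h
      rw [h]
      norm_num
    have e1 : ∫⁻ u in Set.Ioc (0:ℝ) x, ENNReal.ofReal (min x u * u ^ (α - 2))
        = ENNReal.ofReal (x ^ α * α⁻¹) := by
      have congr1 : ∀ u ∈ Set.Ioc (0:ℝ) x,
          ENNReal.ofReal (min x u * u ^ (α - 2)) = ENNReal.ofReal (u ^ (α - 1)) := by
        intro u hu
        rw [min_eq_right hu.2]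
        congr 1
        rw [mul_comm, ← Real.rpow_add_one (ne_of_gt hu.1) (α - 2),
          show α - 2 + 1 = α - 1 by ring]
      rw [setLIntegral_congr_fun measurableSet_Ioc congr1]
      have hint : IntegrableOn (fun u : ℝ => u ^ (α - 1)) (Set.Ioc 0 x) :=
        (intervalIntegrable_iff_integrableOn_Ioc_of_le hx.le).mp
          (intervalIntegral.intervalIntegrable_rpow' (by linarith))
      rw [← ofReal_integral_eq_lintegral_ofReal hint ?_]
      · congr 1
        rw [← intervalIntegral.integral_of_le hx.le]
        rw [integral_rpow (Or.inl (by linarith : (-1:ℝ) < α - 1))]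
        have h11 : α - 1 + 1 = α := by ring
        rw [h11, Real.zero_rpow h0.ne', sub_zero, div_eq_mul_inv]
      · filter_upwards [self_mem_ae_restrict measurableSet_Ioc] with u hu
        exact Real.rpow_nonneg hu.1.le _
    have e2 : ∫⁻ u in Set.Ioi x, ENNReal.ofReal (min x u * u ^ (α - 2))
        = ENNReal.ofReal (x ^ α * (1 - α)⁻¹) := by
      have congr2 : ∀ u ∈ Set.Ioi x,
          ENNReal.ofReal (min x u * u ^ (α - 2)) = ENNReal.ofReal (x * u ^ (α - 2)) := by
        intro u hu
        rw [min_eq_left (le_of_lt hu)]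
      rw [setLIntegral_congr_fun measurableSet_Ioi congr2]
      have hint : IntegrableOn (fun u : ℝ => x * u ^ (α - 2)) (Set.Ioi x) :=
        (integrableOn_Ioi_rpow_of_lt (by linarith) hx).const_mul x
      rw [← ofReal_integral_eq_lintegral_ofReal hint ?_]
      · congr 1
        rw [MeasureTheory.integral_const_mul]
        rw [integral_Ioi_rpow_of_lt (by linarith : α - 2 < -1) hx]
        have h21 : α - 2 + 1 = α - 1 := by ring
        rw [h21]
        rw [← hxpow]
        field_simp
        ring
      · filter_upwards [self_mem_ae_restrict measurableSet_Ioi] with u hu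
        have hu0 : (0:ℝ) < u := lt_trans hx hu
        exact mul_nonneg hx.le (Real.rpow_nonneg hu0.le _)
    rw [← Set.Ioc_union_Ioi_eq_Ioi hx.le]
    rw [lintegral_union measurableSet_Ioi (Set.Ioc_disjoint_Ioi le_rfl)]
    rw [e1, e2, ← ENNReal.ofReal_add
      (mul_nonneg (Real.rpow_nonneg hx.le _) (inv_nonneg.mpr h0.le))
      (mul_nonneg (Real.rpow_nonneg hx.le _) (inv_nonneg.mpr (by linarith)))]
    rw [show x ^ α * α⁻¹ + x ^ α * (1 - α)⁻¹ = x ^ α * (α⁻¹ + (1 - α)⁻¹) by ring]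
    exact ENNReal.ofReal_mul (Real.rpow_nonneg hx.le _)

private lemma auxD {α : ℝ} (h0 : 0 < α) (h1 : α < 1) {p q : ℕ → ℝ}
    (hp0 : ∀ i, 0 ≤ p i) (hpa : Antitone p) (hps : Summable p)
    (hq : ∀ i, 0 ≤ q i ∧ q i ≤ p i)
    (n : ℕ) {c : ℝ} (hc0 : 0 ≤ c) (hcp : c ≤ p n)
    (hmass : ∑ i ∈ Finset.range n, p i + c ≤ ∑' i, q i) :
    ∑ i ∈ Finset.range n, ENNReal.ofReal (p i ^ α) + ENNReal.ofReal (c ^ α)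
      ≤ ∑' i, ENNReal.ofReal (q i ^ α) := by
  have hqs : Summable q := hps.of_nonneg_of_le (fun i => (hq i).1) (fun i => (hq i).2)
  have hmeas : ∀ x : ℝ, AEMeasurable (fun u : ℝ => ENNReal.ofReal (min x u * u ^ (α - 2)))
      ((volume : Measure ℝ).restrict (Set.Ioi (0:ℝ))) := by
    intro x
    refine ENNReal.measurable_ofReal.comp_aemeasurable (AEMeasurable.mul ?_ ?_)
    · exact (measurable_const.min measurable_id).aemeasurable
    · refine ContinuousOn.aemeasurable (fun u hu => ?_) measurableSet_Ioi
      exact (Real.continuousAt_rpow_const u _ (Or.inl (ne_of_gt hu))).continuousWithinAt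
  set K := ENNReal.ofReal (α⁻¹ + (1 - α)⁻¹) with hK
  have hKpos : (0:ℝ) < α⁻¹ + (1 - α)⁻¹ :=
    add_pos (inv_pos.mpr h0) (inv_pos.mpr (by linarith))
  have hK0 : K ≠ 0 := (ENNReal.ofReal_pos.mpr hKpos).ne'
  have hKtop : K ≠ ⊤ := ENNReal.ofReal_ne_top
  rw [← ENNReal.mul_le_mul_iff_left hK0 hKtop]
  have lhs_eq : (∑ i ∈ Finset.range n, ENNReal.ofReal (p i ^ α) + ENNReal.ofReal (c ^ α)) * K
      = ∫⁻ u in Set.Ioi (0:ℝ),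
          (∑ i ∈ Finset.range n, ENNReal.ofReal (min (p i) u * u ^ (α - 2))
            + ENNReal.ofReal (min c u * u ^ (α - 2))) := by
    rw [lintegral_add_right' _ (hmeas c)]
    rw [lintegral_finset_sum' _ (fun i _ => hmeas (p i))]
    rw [add_mul, Finset.sum_mul]
    congr 1
    · exact Finset.sum_congr rfl fun i _ => (auxA h0 h1 (hp0 i)).symm
    · exact (auxA h0 h1 hc0).symm
  have rhs_eq : (∑' i, ENNReal.ofReal (q i ^ α)) * K
      = ∫⁻ u in Set.Ioi (0:ℝ), ∑' i, ENNReal.ofReal (min (q i) u * u ^ (α - 2)) := by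
    rw [lintegral_tsum (fun i => hmeas (q i))]
    rw [← ENNReal.tsum_mul_right]
    exact tsum_congr fun i => (auxA h0 h1 (hq i).1).symm
  rw [lhs_eq, rhs_eq]
  refine lintegral_mono_ae ?_
  filter_upwards [self_mem_ae_restrict measurableSet_Ioi] with u hu
  have hu0 : (0:ℝ) < u := hu
  have hmins : Summable (fun i => min (q i) u) :=
    hqs.of_nonneg_of_le (fun i => le_min (hq i).1 hu0.le) (fun i => min_le_left _ _)
  have eq1 : ∀ x : ℝ, 0 ≤ x → ENNReal.ofReal (min x u * u ^ (α - 2))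
      = ENNReal.ofReal (min x u) * ENNReal.ofReal (u ^ (α - 2)) :=
    fun x hx => ENNReal.ofReal_mul (le_min hx hu0.le)
  calc ∑ i ∈ Finset.range n, ENNReal.ofReal (min (p i) u * u ^ (α - 2))
        + ENNReal.ofReal (min c u * u ^ (α - 2))
      = ENNReal.ofReal (∑ i ∈ Finset.range n, min (p i) u + min c u)
          * ENNReal.ofReal (u ^ (α - 2)) := by
        rw [ENNReal.ofReal_add (Finset.sum_nonneg fun i _ => le_min (hp0 i) hu0.le)
          (le_min hc0 hu0.le)]
        rw [ENNReal.ofReal_sum_of_nonneg (fun i _ => le_min (hp0 i) hu0.le)]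
        rw [add_mul, Finset.sum_mul]
        congr 1
        · exact Finset.sum_congr rfl fun i _ => (eq1 _ (hp0 i))
        · exact eq1 _ hc0
    _ ≤ ENNReal.ofReal (∑' i, min (q i) u) * ENNReal.ofReal (u ^ (α - 2)) := by
        exact mul_le_mul_left (ENNReal.ofReal_le_ofReal
          (auxB hp0 hpa hps hq n hc0 hcp hmass hu0)) _
    _ = ∑' i, ENNReal.ofReal (min (q i) u * u ^ (α - 2)) := by
        rw [ENNReal.ofReal_tsum_of_nonneg (fun i => le_min (hq i).1 hu0.le) hmins]
        rw [← ENNReal.tsum_mul_right]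
        exact tsum_congr fun i => (eq1 _ (hq i).1).symm

open scoped ENNReal

/-- The greedy truncation of a nonincreasing probability vector attains the infimum
of the α-power sum among all subdistributions dominated by `p` with mass `≥ 1 - ε`.
(Sums of α-powers are computed in `ℝ≥0∞` so that they always exist.) -/
theorem truncation_attains_inf (α : ℝ) (hα : α ∈ Set.Ioo (0:ℝ) 1)
    (ε : ℝ) (hε : ε ∈ Set.Ioc (0:ℝ) 1)
    (p : ℕ → ℝ) (hp0 : ∀ i, 0 ≤ p i) (hpmono : ∀ i, p (i + 1) ≤ p i)
    (hpsum : Summable p) (hp1 : ∑' i, p i = 1)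
    (istar : ℕ)
    (histar : 1 - ε ≤ ∑ i ∈ Finset.range istar, p i)
    (hmin : ∀ m, m < istar → ∑ i ∈ Finset.range m, p i < 1 - ε)
    (qstar : ℕ → ℝ)
    (hqstar : ∀ i, qstar i =
      if i + 1 < istar then p i
      else if i + 1 = istar then 1 - ε - ∑ j ∈ Finset.range (istar - 1), p j
      else 0) :
    (∑' i, ENNReal.ofReal (qstar i ^ α)) =
      sInf { S : ℝ≥0∞ | ∃ q : ℕ → ℝ, (∀ i, 0 ≤ q i ∧ q i ≤ p i) ∧
        1 - ε ≤ ∑' i, q i ∧ S = ∑' i, ENNReal.ofReal (q i ^ α) } := by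
  obtain ⟨hα0, hα1⟩ := hα
  obtain ⟨hε0, hε1⟩ := hε
  have hpa : Antitone p := antitone_nat_of_succ_le hpmono
  cases istar with
  | zero =>
    have hq0 : ∀ i, qstar i = 0 := by
      intro i
      rw [hqstar i]
      simp
    have lhs0 : (∑' i, ENNReal.ofReal (qstar i ^ α)) = 0 := by
      simp [hq0, Real.zero_rpow hα0.ne']
    rw [lhs0]
    refine le_antisymm (zero_le) (sInf_le ?_)
    refine ⟨fun _ => 0, fun i => ⟨le_refl _, hp0 i⟩, ?_, ?_⟩
    · simpa using histar
    · simp [Real.zero_rpow hα0.ne']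
  | succ n =>
    set c : ℝ := 1 - ε - ∑ j ∈ Finset.range n, p j with hc
    have hsum_lt : ∑ i ∈ Finset.range n, p i < 1 - ε := hmin n (Nat.lt_succ_self n)
    have hc0 : 0 < c := by rw [hc]; linarith
    have hcp : c ≤ p n := by
      have h := histar
      rw [Finset.sum_range_succ] at h
      rw [hc]; linarith
    have hqv : ∀ i, qstar i = if i < n then p i else if i = n then c else 0 := by
      intro i
      rw [hqstar i, hc]
      simp only [Nat.add_lt_add_iff_right, Nat.add_sub_cancel, add_left_inj]
    have hq0' : ∀ i, n < i → qstar i = 0 := by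
      intro i hi
      rw [hqv i, if_neg (by omega), if_neg (by omega)]
    have lhs_eq : (∑' i, ENNReal.ofReal (qstar i ^ α))
        = ∑ i ∈ Finset.range n, ENNReal.ofReal (p i ^ α) + ENNReal.ofReal (c ^ α) := by
      rw [tsum_eq_sum (s := Finset.range (n+1)) ?_]
      · rw [Finset.sum_range_succ]
        congr 1
        · exact Finset.sum_congr rfl fun i hi => by
            rw [hqv i, if_pos (Finset.mem_range.mp hi)]
        · rw [hqv n, if_neg (lt_irrefl n), if_pos rfl]
      · intro i hi
        have hni : n < i := by
          simp only [Finset.mem_range] at hi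
          omega
        rw [hq0' i hni]
        simp [Real.zero_rpow hα0.ne']
    have mass_eq : ∑' i, qstar i = 1 - ε := by
      rw [tsum_eq_sum (s := Finset.range (n+1)) ?_]
      · rw [Finset.sum_range_succ]
        rw [Finset.sum_congr rfl (fun i hi => by
          rw [hqv i, if_pos (Finset.mem_range.mp hi)])]
        rw [hqv n, if_neg (lt_irrefl n), if_pos rfl, hc]
        ring
      · intro i hi
        have hni : n < i := by
          simp only [Finset.mem_range] at hi
          omega
        exact hq0' i hni
    apply le_antisymm
    · refine le_sInf ?_
      rintro S ⟨q, hq', hqm, rfl⟩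
      rw [lhs_eq]
      refine auxD hα0 hα1 hp0 hpa hpsum hq' n hc0.le hcp ?_
      have he : ∑ i ∈ Finset.range n, p i + c = 1 - ε := by rw [hc]; ring
      linarith
    · refine sInf_le ⟨qstar, ?_, ?_, rfl⟩
      · intro i
        rcases lt_trichotomy i n with h | h | h
        · rw [hqv i, if_pos h]
          exact ⟨hp0 i, le_refl _⟩
        · subst h
          rw [hqv i, if_neg (lt_irrefl _), if_pos rfl]
          exact ⟨hc0.le, hcp⟩
        · rw [hqv i, if_neg (by omega), if_neg (by omega)]
          exact ⟨le_refl _, hp0 i⟩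
      · rw [mass_eq]
end

section
/- Let X be a random variable on a countable set 𝒳 with distribution P_X, let α ∈ (0,1) and ε ∈ [0,1). Suppose the values x^1, x^2, ... are ordered so that P_X(x^1) ≥ P_X(x^2) ≥ ⋯, and let i* be the least integer with ∑_{i=1}^{i*} P_X(x^i) ≥ 1−ε. Define Q*(x^i) = P_X(x^i) for i < i*, Q*(x^{i*}) = 1 − ε − ∑_{i<i*} P_X(x^i), and Q*(x^i) = 0 for i > i*. Then the ε-smooth Rényi entropy H_α^ε(X) := inf_{Q ∈ B^ε(P_X)} (1/(1−α)) log ∑_x Q(x)^α equals (1/(1−α)) log ∑_{i=1}^{i*} Q*(x^i)^α, where B^ε(P_X) is the set of nonnegative functions Q on 𝒳 with Q(x) ≤ P_X(x) for all x and ∑_x Q(x) ≥ 1−ε. -/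
open Finset

lemma topn_sum_le (p : ℕ → ℝ) (hpa : ∀ i j, i ≤ j → p j ≤ p i) :
    ∀ s : Finset ℕ, ∑ j ∈ s, p j ≤ ∑ i ∈ Finset.range s.card, p i := by
  suffices H : ∀ N (s : Finset ℕ), s.card = N → ∑ j ∈ s, p j ≤ ∑ i ∈ Finset.range s.card, p i by
    intro s; exact H s.card s rfl
  intro N
  induction N with
  | zero => intro s hn; simp [Finset.card_eq_zero.mp hn]
  | succ n ih =>
    intro s hn
    rw [hn]
    have hne : s.Nonempty := Finset.card_pos.mp (by omega)
    set M := s.max' hne with hM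
    have hMs : M ∈ s := s.max'_mem hne
    have hcard : (s.erase M).card = n := by rw [Finset.card_erase_of_mem hMs, hn]; omega
    have hnM : n ≤ M := by
      by_contra h
      push_neg at h
      have hsub : s ⊆ Finset.range n := fun x hx =>
        Finset.mem_range.mpr (lt_of_le_of_lt (s.le_max' x hx) h)
      have := Finset.card_le_card hsub
      rw [hn, Finset.card_range] at this
      omega
    calc ∑ j ∈ s, p j = ∑ j ∈ s.erase M, p j + p M := (Finset.sum_erase_add _ _ hMs).symm
      _ ≤ ∑ i ∈ Finset.range n, p i + p n := add_le_add (by have := ih _ hcard; rwa [hcard] at this) (hpa n M hnM)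
      _ = ∑ i ∈ Finset.range (n+1), p i := (Finset.sum_range_succ p n).symm

/-- identity D -/
lemma minD (p Qstar : ℕ → ℝ) (istar : ℕ) (c : ℝ)
    (histar : c ≤ ∑ i ∈ Finset.range istar, p i)
    (hQeq : ∀ i, i + 1 < istar → Qstar i = p i)
    (hQz : ∀ i, istar ≤ i → Qstar i = 0)
    (hQsum : ∑ i ∈ Finset.range istar, Qstar i = c)
    (n : ℕ) :
    min c (∑ i ∈ Finset.range n, p i) ≤ ∑ i ∈ Finset.range n, Qstar i := by
  rcases lt_or_ge n istar with h | h
  · have : ∑ i ∈ Finset.range n, Qstar i = ∑ i ∈ Finset.range n, p i := by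
      apply Finset.sum_congr rfl
      intro i hi
      exact hQeq i (by simp only [Finset.mem_range] at hi; omega)
    rw [this]
    exact min_le_right _ _
  · have : ∑ i ∈ Finset.range n, Qstar i = ∑ i ∈ Finset.range istar, Qstar i := by
      symm
      apply Finset.sum_subset (Finset.range_subset_range.mpr h)
      intro i _ hi
      exact hQz i (by simp only [Finset.mem_range] at hi; omega)
    rw [this, hQsum]
    exact min_le_left _ _

lemma claim_plus (p Qstar q : ℕ → ℝ) (istar : ℕ) (c θ : ℝ) (hθ : 0 < θ)
    (hq0 : ∀ i, 0 ≤ q i) (hqp : ∀ i, q i ≤ p i) (hsq : Summable q)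
    (hmass : ∑' i, q i = c)
    (hpa : ∀ i j, i ≤ j → p j ≤ p i)
    (hQ0 : ∀ i, 0 ≤ Qstar i)
    (histar : c ≤ ∑ i ∈ Finset.range istar, p i)
    (hQeq : ∀ i, i + 1 < istar → Qstar i = p i)
    (hQz : ∀ i, istar ≤ i → Qstar i = 0)
    (hQsum : ∑ i ∈ Finset.range istar, Qstar i = c) :
    ∑' i, max (q i - θ) 0 ≤ ∑ i ∈ Finset.range istar, max (Qstar i - θ) 0 := by
  have hfin : {i | θ < q i}.Finite := by
    have h1 := hsq.tendsto_cofinite_zero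
    have h2 : {i | q i ∈ Set.Iio θ} ∈ Filter.cofinite := h1 (Iio_mem_nhds hθ)
    rw [Filter.mem_cofinite] at h2
    apply Set.Finite.subset h2
    intro i hi
    simp only [Set.mem_compl_iff, Set.mem_setOf_eq, Set.mem_Iio] at *
    linarith
  set Hs := hfin.toFinset with hHs
  set n := Hs.card with hn
  have t1 : ∑' i, max (q i - θ) 0 = ∑ i ∈ Hs, (q i - θ) := by
    rw [tsum_eq_sum (s := Hs) ?_]
    · apply Finset.sum_congr rfl
      intro i hi
      rw [hHs, Set.Finite.mem_toFinset] at hi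
      simp only [Set.mem_setOf_eq] at hi
      exact max_eq_left (by linarith)
    · intro i hi
      rw [hHs, Set.Finite.mem_toFinset] at hi
      simp only [Set.mem_setOf_eq, not_lt] at hi
      exact max_eq_right (by linarith)
  have t2 : ∑ i ∈ Hs, q i ≤ c := by
    rw [← hmass]
    exact Summable.sum_le_tsum Hs (fun i _ => hq0 i) hsq
  have t3 : ∑ i ∈ Hs, q i ≤ ∑ i ∈ Finset.range n, p i :=
    le_trans (Finset.sum_le_sum (fun i _ => hqp i)) (topn_sum_le p hpa Hs)
  have t4 : ∑ i ∈ Hs, q i ≤ ∑ i ∈ Finset.range n, Qstar i :=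
    le_trans (le_min t2 t3) (minD p Qstar istar c histar hQeq hQz hQsum n)
  have t5 : ∑ i ∈ Finset.range n, (Qstar i - θ) ≤
      ∑ i ∈ Finset.range istar, max (Qstar i - θ) 0 := by
    have t5a : ∑ i ∈ Finset.range n, (Qstar i - θ) ≤
        ∑ i ∈ Finset.range n, max (Qstar i - θ) 0 :=
      Finset.sum_le_sum (fun i _ => le_max_left _ _)
    rcases le_total n istar with h | h
    · refine le_trans t5a (Finset.sum_le_sum_of_subset_of_nonneg
        (Finset.range_subset_range.mpr h) (fun i _ _ => le_max_right _ _))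
    · refine le_trans t5a (le_of_eq ?_)
      symm
      apply Finset.sum_subset (Finset.range_subset_range.mpr h)
      intro i _ hi
      rw [hQz i (by simp only [Finset.mem_range] at hi; omega)]
      simp [le_of_lt hθ]
  calc ∑' i, max (q i - θ) 0 = ∑ i ∈ Hs, (q i - θ) := t1
    _ = ∑ i ∈ Hs, q i - n * θ := by
        rw [Finset.sum_sub_distrib, Finset.sum_const, hn, nsmul_eq_mul]
    _ ≤ ∑ i ∈ Finset.range n, Qstar i - n * θ := by linarith
    _ = ∑ i ∈ Finset.range n, (Qstar i - θ) := by
        rw [Finset.sum_sub_distrib, Finset.sum_const, Finset.card_range, nsmul_eq_mul]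
    _ ≤ _ := t5
lemma min_eq_sub_max (a θ : ℝ) : min a θ = a - max (a - θ) 0 := by
  rcases le_total a θ with h | h
  · rw [min_eq_left h, max_eq_right (by linarith), sub_zero]
  · rw [min_eq_right h, max_eq_left (by linarith)]; ring

lemma claim_min (p Qstar q : ℕ → ℝ) (istar : ℕ) (c θ : ℝ) (hθ : 0 < θ) (hc : 0 < c)
    (hq0 : ∀ i, 0 ≤ q i) (hqp : ∀ i, q i ≤ p i) (hsq : Summable q)
    (hmass : c ≤ ∑' i, q i)
    (hpa : ∀ i j, i ≤ j → p j ≤ p i)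
    (hQ0 : ∀ i, 0 ≤ Qstar i)
    (histar : c ≤ ∑ i ∈ Finset.range istar, p i)
    (hQeq : ∀ i, i + 1 < istar → Qstar i = p i)
    (hQz : ∀ i, istar ≤ i → Qstar i = 0)
    (hQsum : ∑ i ∈ Finset.range istar, Qstar i = c) :
    ∑ i ∈ Finset.range istar, min (Qstar i) θ ≤ ∑' i, min (q i) θ := by
  set S := ∑' i, q i with hS
  have hS0 : 0 < S := lt_of_lt_of_le hc hmass
  set t := c / S with ht
  have ht0 : 0 < t := div_pos hc hS0
  have ht1 : t ≤ 1 := (div_le_one hS0).mpr hmass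
  set q' : ℕ → ℝ := fun i => t * q i with hq'
  have hsq' : Summable q' := hsq.mul_left t
  have hq'0 : ∀ i, 0 ≤ q' i := fun i => mul_nonneg ht0.le (hq0 i)
  have hq'q : ∀ i, q' i ≤ q i := fun i => by
    calc t * q i ≤ 1 * q i := mul_le_mul_of_nonneg_right ht1 (hq0 i)
      _ = q i := one_mul _
  have hq'p : ∀ i, q' i ≤ p i := fun i => le_trans (hq'q i) (hqp i)
  have hmass' : ∑' i, q' i = c := by
    rw [hq']
    rw [tsum_mul_left]
    rw [← hS, ht]
    field_simp
  have hmax := claim_plus p Qstar q' istar c θ hθ hq'0 hq'p hsq' hmass' hpa hQ0 histar hQeq hQz hQsum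
  -- summabilities
  have smax' : Summable (fun i => max (q' i - θ) 0) :=
    Summable.of_nonneg_of_le (fun i => le_max_right _ _)
      (fun i => by rw [max_le_iff]; exact ⟨by linarith [hq'0 i], hq'0 i⟩) hsq'
  have smin : Summable (fun i => min (q i) θ) :=
    Summable.of_nonneg_of_le (fun i => le_min (hq0 i) hθ.le) (fun i => min_le_left _ _) hsq
  have smin' : Summable (fun i => min (q' i) θ) :=
    Summable.of_nonneg_of_le (fun i => le_min (hq'0 i) hθ.le) (fun i => min_le_left _ _) hsq'
  have e1 : ∑' i, min (q' i) θ = c - ∑' i, max (q' i - θ) 0 := by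
    rw [← hmass']
    rw [← Summable.tsum_sub hsq' smax']
    exact tsum_congr (fun i => min_eq_sub_max _ _)
  have e2 : ∑ i ∈ Finset.range istar, min (Qstar i) θ
      = c - ∑ i ∈ Finset.range istar, max (Qstar i - θ) 0 := by
    rw [← hQsum, ← Finset.sum_sub_distrib]
    exact Finset.sum_congr rfl (fun i _ => min_eq_sub_max _ _)
  have e3 : ∑' i, min (q' i) θ ≤ ∑' i, min (q i) θ :=
    Summable.tsum_le_tsum (fun i => min_le_min (hq'q i) le_rfl) smin' smin
  rw [e2]
  calc c - ∑ i ∈ Finset.range istar, max (Qstar i - θ) 0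
      ≤ c - ∑' i, max (q' i - θ) 0 := by linarith
    _ = ∑' i, min (q' i) θ := e1.symm
    _ ≤ ∑' i, min (q i) θ := e3
open MeasureTheory in
lemma scalar_int (α : ℝ) (hα : α ∈ Set.Ioo (0:ℝ) 1) (x : ℝ) (hx : 0 ≤ x) :
    ∫⁻ θ in Set.Ioi (0:ℝ), ENNReal.ofReal (min x θ) * ENNReal.ofReal (θ ^ (α-2))
      = ENNReal.ofReal (x ^ α) * ENNReal.ofReal (α⁻¹ + (1-α)⁻¹) := by
  obtain ⟨hα0, hα1⟩ := hα
  rcases eq_or_lt_of_le hx with hx0 | hx0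
  · rw [setLIntegral_congr_fun measurableSet_Ioi
      (fun θ (hθ : 0 < θ) => ?_), lintegral_zero, ← hx0,
      Real.zero_rpow hα0.ne', ENNReal.ofReal_zero, zero_mul]
    rw [← hx0, min_eq_left hθ.le, ENNReal.ofReal_zero, zero_mul]
  · have hsplit : Set.Ioi (0:ℝ) = Set.Ioc 0 x ∪ Set.Ioi x :=
      (Set.Ioc_union_Ioi_eq_Ioi hx).symm
    rw [hsplit, lintegral_union measurableSet_Ioi (Set.Ioc_disjoint_Ioi le_rfl)]
    have part1 : ∫⁻ θ in Set.Ioc 0 x, ENNReal.ofReal (min x θ) * ENNReal.ofReal (θ ^ (α-2))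
        = ENNReal.ofReal (x ^ α / α) := by
      rw [setLIntegral_congr_fun measurableSet_Ioc
        (fun θ (hθ : θ ∈ Set.Ioc 0 x) => ?_)
        (g := fun θ => ENNReal.ofReal (θ ^ (α-1)))]
      · have hint : IntegrableOn (fun θ : ℝ => θ ^ (α-1)) (Set.Ioc 0 x) volume := by
          have h := intervalIntegral.intervalIntegrable_rpow' (a := 0) (b := x)
            (r := α - 1) (by linarith)
          rw [IntervalIntegrable] at h
          exact h.1
        rw [← ofReal_integral_eq_lintegral_ofReal hint
          ((ae_restrict_iff' measurableSet_Ioc).2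
            (ae_of_all _ (fun θ hθ => Real.rpow_nonneg hθ.1.le _)))]
        congr 1
        rw [← intervalIntegral.integral_of_le hx]
        rw [integral_rpow (Or.inl (by linarith))]
        have h1 : α - 1 + 1 = α := by ring
        rw [h1, Real.zero_rpow hα0.ne', sub_zero]
      · rw [min_eq_right hθ.2, ← ENNReal.ofReal_mul hθ.1.le]
        congr 1
        rw [show α - 1 = (α - 2) + 1 by ring, Real.rpow_add_one hθ.1.ne']
        ring
    have part2 : ∫⁻ θ in Set.Ioi x, ENNReal.ofReal (min x θ) * ENNReal.ofReal (θ ^ (α-2))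
        = ENNReal.ofReal (x ^ α / (1 - α)) := by
      rw [setLIntegral_congr_fun measurableSet_Ioi
        (fun θ (hθ : x < θ) => ?_)
        (g := fun θ => ENNReal.ofReal x * ENNReal.ofReal (θ ^ (α-2)))]
      · rw [lintegral_const_mul' _ _ ENNReal.ofReal_ne_top]
        rw [← ofReal_integral_eq_lintegral_ofReal
          (integrableOn_Ioi_rpow_of_lt (by linarith) hx0)
          ((ae_restrict_iff' measurableSet_Ioi).2
            (ae_of_all _ (fun θ hθ => Real.rpow_nonneg (le_trans hx (le_of_lt hθ)) _)))]
        rw [integral_Ioi_rpow_of_lt (by linarith) hx0]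
        rw [← ENNReal.ofReal_mul hx]
        congr 1
        have h2 : α - 2 + 1 = α - 1 := by ring
        rw [h2]
        have hxa : x ^ α = x * x ^ (α - 1) := by
          have h := Real.rpow_add hx0 1 (α - 1)
          have h1 : (1:ℝ) + (α - 1) = α := by ring
          rw [h1, Real.rpow_one] at h
          exact h
        have h3 : -(x ^ (α-1)) / (α-1) = x ^ (α-1) / (1-α) := by
          rw [div_eq_div_iff (by intro h; apply hα1.ne; linarith) (by intro h; apply hα1.ne; linarith)]
          ring
        rw [hxa, mul_div_assoc, h3]
      · rw [min_eq_left (le_of_lt hθ)]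
    rw [part1, part2, ← ENNReal.ofReal_add
      (div_nonneg (Real.rpow_nonneg hx _) hα0.le)
      (div_nonneg (Real.rpow_nonneg hx _) (by linarith)),
      ← ENNReal.ofReal_mul (Real.rpow_nonneg hx _)]
    congr 1
    field_simp
open MeasureTheory in
lemma core_ineq (p Qstar q : ℕ → ℝ) (istar : ℕ) (c α : ℝ)
    (hα : α ∈ Set.Ioo (0:ℝ) 1) (hc : 0 < c)
    (hq0 : ∀ i, 0 ≤ q i) (hqp : ∀ i, q i ≤ p i) (hsq : Summable q)
    (hmass : c ≤ ∑' i, q i)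
    (hsqa : Summable (fun i => q i ^ α))
    (hpa : ∀ i j, i ≤ j → p j ≤ p i)
    (hQ0 : ∀ i, 0 ≤ Qstar i)
    (histar : c ≤ ∑ i ∈ Finset.range istar, p i)
    (hQeq : ∀ i, i + 1 < istar → Qstar i = p i)
    (hQz : ∀ i, istar ≤ i → Qstar i = 0)
    (hQsum : ∑ i ∈ Finset.range istar, Qstar i = c) :
    ∑ i ∈ Finset.range istar, Qstar i ^ α ≤ ∑' i, q i ^ α := by
  obtain ⟨hα0, hα1⟩ := hα
  set C := ENNReal.ofReal (α⁻¹ + (1-α)⁻¹) with hC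
  have hC0 : C ≠ 0 := by
    rw [hC, ne_eq, ENNReal.ofReal_eq_zero, not_le]
    have : 0 < α⁻¹ := inv_pos.mpr hα0
    have : 0 < (1-α)⁻¹ := inv_pos.mpr (by linarith)
    linarith
  have hCt : C ≠ ⊤ := ENNReal.ofReal_ne_top
  have meas : ∀ a : ℝ, Measurable fun θ : ℝ =>
      ENNReal.ofReal (min a θ) * ENNReal.ofReal (θ ^ (α-2)) := fun a =>
    ((measurable_const.min measurable_id).ennreal_ofReal).mul
      ((measurable_id.pow measurable_const).ennreal_ofReal)
  -- key1 for q (tsum over ℕ)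
  have key1 : ENNReal.ofReal (∑' i, q i ^ α) * C
      = ∫⁻ θ in Set.Ioi (0:ℝ),
          ENNReal.ofReal (∑' i, min (q i) θ) * ENNReal.ofReal (θ ^ (α-2)) := by
    rw [ENNReal.ofReal_tsum_of_nonneg (fun i => Real.rpow_nonneg (hq0 i) α) hsqa,
      ENNReal.tsum_mul_right.symm]
    have : ∀ i, ENNReal.ofReal (q i ^ α) * C
        = ∫⁻ θ in Set.Ioi (0:ℝ),
            ENNReal.ofReal (min (q i) θ) * ENNReal.ofReal (θ ^ (α-2)) :=
      fun i => (scalar_int α ⟨hα0, hα1⟩ (q i) (hq0 i)).symm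
    rw [tsum_congr this, ← lintegral_tsum (fun i => (meas (q i)).aemeasurable)]
    apply setLIntegral_congr_fun measurableSet_Ioi
    intro θ (hθ : 0 < θ)
    have hsummin : Summable (fun i => min (q i) θ) :=
      Summable.of_nonneg_of_le (fun i => le_min (hq0 i) hθ.le) (fun i => min_le_left _ _) hsq
    beta_reduce
    rw [ENNReal.tsum_mul_right,
      ← ENNReal.ofReal_tsum_of_nonneg (fun i => le_min (hq0 i) hθ.le) hsummin]
  -- key2 for Qstar (finite sum)
  have key2 : ENNReal.ofReal (∑ i ∈ Finset.range istar, Qstar i ^ α) * C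
      = ∫⁻ θ in Set.Ioi (0:ℝ),
          ENNReal.ofReal (∑ i ∈ Finset.range istar, min (Qstar i) θ)
            * ENNReal.ofReal (θ ^ (α-2)) := by
    rw [ENNReal.ofReal_sum_of_nonneg (fun i _ => Real.rpow_nonneg (hQ0 i) α)]
    have : ∀ i ∈ Finset.range istar, ENNReal.ofReal (Qstar i ^ α) * C
        = ∫⁻ θ in Set.Ioi (0:ℝ),
            ENNReal.ofReal (min (Qstar i) θ) * ENNReal.ofReal (θ ^ (α-2)) :=
      fun i _ => (scalar_int α ⟨hα0, hα1⟩ (Qstar i) (hQ0 i)).symm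
    rw [Finset.sum_mul, Finset.sum_congr rfl this,
      ← lintegral_finset_sum _ (fun i _ => meas (Qstar i))]
    apply setLIntegral_congr_fun measurableSet_Ioi
    intro θ (hθ : 0 < θ)
    beta_reduce
    rw [← Finset.sum_mul,
      ← ENNReal.ofReal_sum_of_nonneg (fun i _ => le_min (hQ0 i) hθ.le)]
  -- monotonicity
  have mono : ENNReal.ofReal (∑ i ∈ Finset.range istar, Qstar i ^ α) * C
      ≤ ENNReal.ofReal (∑' i, q i ^ α) * C := by
    rw [key1, key2]
    apply lintegral_mono_ae
    rw [ae_restrict_iff' measurableSet_Ioi]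
    apply ae_of_all
    intro θ (hθ : 0 < θ)
    apply mul_le_mul_left
    apply ENNReal.ofReal_le_ofReal
    exact claim_min p Qstar q istar c θ hθ hc hq0 hqp hsq hmass hpa hQ0 histar hQeq hQz hQsum
  have := (ENNReal.mul_le_mul_iff_left hC0 hCt).mp mono
  exact (ENNReal.ofReal_le_ofReal_iff (tsum_nonneg (fun i => Real.rpow_nonneg (hq0 i) α))).mp this

/-- The ε-smooth Rényi entropy of order `α ∈ (0,1)` of a discrete distribution is
attained by truncating `P` to its `i*` most probable values.  The defining infimum
is restricted to `Q` with summable α-power (non-summable `Q` have infinite value and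
never attain the infimum). -/
theorem smooth_renyi_entropy_eq (X : Type) (e : ℕ ≃ X)
    (P : X → ℝ) (hP0 : ∀ x, 0 ≤ P x) (hPsum : Summable P) (hP1 : ∑' x, P x = 1)
    (hord : ∀ i, P (e (i + 1)) ≤ P (e i))
    (α : ℝ) (hα : α ∈ Set.Ioo (0:ℝ) 1) (ε : ℝ) (hε : ε ∈ Set.Ico (0:ℝ) 1)
    (istar : ℕ)
    (histar : 1 - ε ≤ ∑ i ∈ Finset.range istar, P (e i))
    (hmin : ∀ m, m < istar → ∑ i ∈ Finset.range m, P (e i) < 1 - ε)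
    (Qstar : ℕ → ℝ)
    (hQstar : ∀ i, Qstar i =
      if i + 1 < istar then P (e i)
      else if i + 1 = istar then 1 - ε - ∑ j ∈ Finset.range (istar - 1), P (e j)
      else 0) :
    sInf { h : ℝ | ∃ Q : X → ℝ, (∀ x, 0 ≤ Q x ∧ Q x ≤ P x) ∧
        (1 - ε ≤ ∑' x, Q x) ∧ Summable (fun x => Q x ^ α) ∧
        h = (1 / (1 - α)) * Real.log (∑' x, Q x ^ α) } =
      (1 / (1 - α)) * Real.log (∑ i ∈ Finset.range istar, Qstar i ^ α) := by
  obtain ⟨hα0, hα1⟩ := hα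
  obtain ⟨hε0, hε1⟩ := hε
  have hpa : ∀ i j, i ≤ j → P (e j) ≤ P (e i) := fun i j h =>
    antitone_nat_of_succ_le (f := fun i => P (e i)) hord h
  have hist : 0 < istar := by
    rcases Nat.eq_zero_or_pos istar with h0 | h
    · rw [h0] at histar; simp at histar; linarith
    · exact h
  set m := istar - 1 with hmdef
  have hm1 : m + 1 = istar := by omega
  have hsmall : ∑ j ∈ Finset.range m, P (e j) < 1 - ε := hmin m (by omega)
  have hbig : 1 - ε ≤ ∑ j ∈ Finset.range m, P (e j) + P (e m) := by
    rw [← Finset.sum_range_succ, hm1]; exact histar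
  have hQm : Qstar m = 1 - ε - ∑ j ∈ Finset.range m, P (e j) := by
    rw [hQstar m, if_neg (by omega), if_pos (by omega)]
  have hQeq : ∀ i, i + 1 < istar → Qstar i = P (e i) := fun i h => by
    rw [hQstar i, if_pos h]
  have hQz : ∀ i, istar ≤ i → Qstar i = 0 := fun i h => by
    rw [hQstar i, if_neg (by omega), if_neg (by omega)]
  have hQ0 : ∀ i, 0 ≤ Qstar i := by
    intro i
    rcases lt_trichotomy (i+1) istar with h | h | h
    · rw [hQeq i h]; exact hP0 _
    · have : i = m := by omega
      rw [this, hQm]; linarith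
    · rw [hQz i (by omega)]
  have hQp : ∀ i, Qstar i ≤ P (e i) := by
    intro i
    rcases lt_trichotomy (i+1) istar with h | h | h
    · rw [hQeq i h]
    · have : i = m := by omega
      rw [this, hQm]; linarith
    · rw [hQz i (by omega)]; exact hP0 _
  have hQsum : ∑ i ∈ Finset.range istar, Qstar i = 1 - ε := by
    rw [← hm1, Finset.sum_range_succ]
    have h1 : ∑ i ∈ Finset.range m, Qstar i = ∑ i ∈ Finset.range m, P (e i) :=
      Finset.sum_congr rfl (fun i hi =>
        hQeq i (by simp only [Finset.mem_range] at hi; omega))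
    rw [h1, hQm]; ring
  have hQmpos : 0 < Qstar m := by rw [hQm]; linarith
  have hpos : 0 < ∑ i ∈ Finset.range istar, Qstar i ^ α := by
    apply Finset.sum_pos' (fun i _ => Real.rpow_nonneg (hQ0 i) α)
    exact ⟨m, Finset.mem_range.mpr (by omega), Real.rpow_pos_of_pos hQmpos α⟩
  have h1α : 0 < 1 - α := by linarith
  have hcoef : 0 ≤ 1 / (1 - α) := by positivity
  -- lower bound
  have lb : ∀ h ∈ { h : ℝ | ∃ Q : X → ℝ, (∀ x, 0 ≤ Q x ∧ Q x ≤ P x) ∧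
      (1 - ε ≤ ∑' x, Q x) ∧ Summable (fun x => Q x ^ α) ∧
      h = (1 / (1 - α)) * Real.log (∑' x, Q x ^ α) },
      (1 / (1 - α)) * Real.log (∑ i ∈ Finset.range istar, Qstar i ^ α) ≤ h := by
    rintro h ⟨Q, hQle, hQmass, hQsumm, rfl⟩
    have hQsum0 : Summable Q :=
      Summable.of_nonneg_of_le (fun x => (hQle x).1) (fun x => (hQle x).2) hPsum
    have hsq : Summable (fun i => Q (e i)) := (e.summable_iff (f := Q)).mpr hQsum0
    have hsqa : Summable (fun i => Q (e i) ^ α) :=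
      (e.summable_iff (f := fun x => Q x ^ α)).mpr hQsumm
    have hmass : 1 - ε ≤ ∑' i, Q (e i) := by rw [e.tsum_eq Q]; exact hQmass
    have hcore := core_ineq (fun i => P (e i)) Qstar (fun i => Q (e i)) istar (1-ε) α
      ⟨hα0, hα1⟩ (by linarith) (fun i => (hQle _).1) (fun i => (hQle _).2) hsq hmass hsqa
      hpa hQ0 histar hQeq hQz hQsum
    have heq : ∑' i, Q (e i) ^ α = ∑' x, Q x ^ α := e.tsum_eq (fun x => Q x ^ α)
    rw [heq] at hcore
    exact mul_le_mul_of_nonneg_left (Real.log_le_log hpos hcore) hcoef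
  -- membership
  have mem : (1 / (1 - α)) * Real.log (∑ i ∈ Finset.range istar, Qstar i ^ α) ∈
      { h : ℝ | ∃ Q : X → ℝ, (∀ x, 0 ≤ Q x ∧ Q x ≤ P x) ∧
        (1 - ε ≤ ∑' x, Q x) ∧ Summable (fun x => Q x ^ α) ∧
        h = (1 / (1 - α)) * Real.log (∑' x, Q x ^ α) } := by
    refine ⟨fun x => Qstar (e.symm x), fun x => ⟨hQ0 _, ?_⟩, ?_, ?_, ?_⟩
    · have := hQp (e.symm x)
      rwa [e.apply_symm_apply] at this
    · have t : ∑' x, Qstar (e.symm x) = ∑' i, Qstar i := e.symm.tsum_eq Qstar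
      rw [t, tsum_eq_sum (s := Finset.range istar)
        (fun i hi => hQz i (by simp only [Finset.mem_range] at hi; omega)), hQsum]
    · apply summable_of_ne_finset_zero (s := (Finset.range istar).map e.toEmbedding)
      intro x hx
      have hge : istar ≤ e.symm x := by
        by_contra hlt
        push_neg at hlt
        apply hx
        rw [Finset.mem_map]
        exact ⟨e.symm x, Finset.mem_range.mpr hlt, e.apply_symm_apply x⟩
      show Qstar (e.symm x) ^ α = 0
      rw [hQz _ hge, Real.zero_rpow hα0.ne']
    · have t : ∑' x, Qstar (e.symm x) ^ α = ∑' i, Qstar i ^ α :=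
        e.symm.tsum_eq (fun i => Qstar i ^ α)
      rw [t, tsum_eq_sum (s := Finset.range istar)
        (fun i hi => by
          rw [hQz i (by simp only [Finset.mem_range] at hi; omega),
            Real.zero_rpow hα0.ne'])]
  exact le_antisymm (csInf_le ⟨_, lb⟩ mem) (le_csInf ⟨_, mem⟩ lb)
end

section
/- Fix ρ > 0 and ε ∈ [0,1). Let X take values in 𝒳 = {1,...,K} and Y in a countable set 𝒴, with joint law P_{XY}. For any guessing strategy G = ((σ_y, π_y))_{y∈𝒴} (σ_y a permutation of 𝒳, π_y(i) ∈ [0,1] stopping probabilities, λ_y(i) = ∏_{j=1}^i (1−π_y(j))) whose error probability p_e = 1 − ∑_{x,y} λ_y(σ_y(x)) P_{XY}(x,y) satisfies p_e ≤ ε, the expected cost C̄_ρ = ∑_{x,y} λ_y(σ_y(x)) P_{XY}(x,y) σ_y(x)^ρ satisfies C̄_ρ ≥ (1 + log K)^{−ρ} · exp{ ρ · H_{1/(1+ρ)}^ε(X|Y) }. -/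
/-- Conditional ε-smooth Rényi entropy, finite `𝒳`, countable `𝒴`. -/
noncomputable def condSmoothRenyi {X Y : Type} [Fintype X] [Countable Y]
    (P : X → Y → ℝ) (α ε : ℝ) : ℝ :=
  sInf { h : ℝ | ∃ Q : X → Y → ℝ, (∀ x y, 0 ≤ Q x y ∧ Q x y ≤ P x y) ∧
    (1 - ε ≤ ∑' y, ∑ x, Q x y) ∧
    Summable (fun y => (∑ x, Q x y ^ α) ^ (1 / α)) ∧
    h = (α / (1 - α)) * Real.log (∑' y, (∑ x, Q x y ^ α) ^ (1 / α)) }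

/-- `λ_y(i) = ∏_{j ≤ i} (1 - π_y(j))`: probability of not having given up before
(and including) the `i`-th guess. -/
noncomputable def lamG {K : ℕ} (π : Fin K → ℝ) (i : Fin K) : ℝ :=
  ∏ j ∈ Finset.univ.filter (· ≤ i), (1 - π j)

lemma real_rpow_add_le_add_rpow {a b p : ℝ} (ha : 0 ≤ a) (hb : 0 ≤ b)
    (hp : 0 ≤ p) (hp1 : p ≤ 1) : (a + b) ^ p ≤ a ^ p + b ^ p := by
  have h := NNReal.rpow_add_le_add_rpow a.toNNReal b.toNNReal hp hp1
  have h2 := NNReal.coe_le_coe.2 h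
  push_cast at h2
  rwa [Real.coe_toNNReal a ha, Real.coe_toNNReal b hb] at h2

lemma sum_rpow_le_rpow_sum' {ι : Type*} (s : Finset ι) (f : ι → ℝ)
    (hf : ∀ i ∈ s, 0 ≤ f i) {p : ℝ} (hp : 0 < p) (hp1 : p ≤ 1) :
    (∑ i ∈ s, f i) ^ p ≤ ∑ i ∈ s, f i ^ p := by
  induction s using Finset.cons_induction with
  | empty => simp [Real.zero_rpow hp.ne']
  | cons a s ha ih =>
    rw [Finset.sum_cons, Finset.sum_cons]
    have h1 : 0 ≤ f a := hf a (Finset.mem_cons_self a s)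
    have h2 : 0 ≤ ∑ i ∈ s, f i := Finset.sum_nonneg fun i hi => hf i (Finset.mem_cons_of_mem hi)
    calc (f a + ∑ i ∈ s, f i) ^ p ≤ f a ^ p + (∑ i ∈ s, f i) ^ p :=
          real_rpow_add_le_add_rpow h1 h2 hp.le hp1
      _ ≤ f a ^ p + ∑ i ∈ s, f i ^ p := by
          gcongr
          exact ih fun i hi => hf i (Finset.mem_cons_of_mem hi)

lemma lamG_nonneg {K : ℕ} {π : Fin K → ℝ} (hπ : ∀ i, 0 ≤ π i ∧ π i ≤ 1) (i : Fin K) :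
    0 ≤ lamG π i :=
  Finset.prod_nonneg fun j _ => by linarith [(hπ j).2]

lemma lamG_le_one {K : ℕ} {π : Fin K → ℝ} (hπ : ∀ i, 0 ≤ π i ∧ π i ≤ 1) (i : Fin K) :
    lamG π i ≤ 1 :=
  Finset.prod_le_one (fun j _ => by linarith [(hπ j).2]) (fun j _ => by linarith [(hπ j).1])

/-- Arikan-type single-letter converse via Hölder's inequality. -/
lemma arikan {K : ℕ} (hK : 0 < K) {ρ : ℝ} (hρ : 0 < ρ) (q : Fin K → ℝ) (hq : ∀ x, 0 ≤ q x)
    (σ : Equiv.Perm (Fin K)) :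
    (∑ x, q x ^ (1/(1+ρ))) ^ (1+ρ) ≤
      (1 + Real.log K) ^ ρ * ∑ x, q x * (((σ x : ℕ) : ℝ) + 1) ^ ρ := by
  have h1ρ : (0:ℝ) < 1 + ρ := by linarith
  have hn0 : ∀ x : Fin K, (0:ℝ) < ((σ x : ℕ) : ℝ) + 1 := fun x => by positivity
  have hpq : Real.HolderConjugate (1+ρ) ((1+ρ)/ρ) := by
    rw [Real.holderConjugate_iff_eq_conjExponent (by linarith), add_sub_cancel_left]
  set n : Fin K → ℝ := fun x => ((σ x : ℕ) : ℝ) + 1 with hn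
  set A : ℝ := ∑ x, q x * n x ^ ρ with hA
  have hA0 : 0 ≤ A :=
    Finset.sum_nonneg fun x _ => mul_nonneg (hq x) (Real.rpow_nonneg (hn0 x).le ρ)
  set B : ℝ := 1 + Real.log K with hB
  have hB1 : 1 ≤ B := by
    have : 0 ≤ Real.log K := Real.log_nonneg (by exact_mod_cast hK)
    simp only [hB]; linarith
  have hB0 : (0:ℝ) < B := by linarith
  have key : ∑ x, q x ^ (1/(1+ρ)) ≤ A ^ (1/(1+ρ)) * B ^ (1/((1+ρ)/ρ)) := by
    have hf : ∀ x ∈ Finset.univ, (0:ℝ) ≤ (q x * n x ^ ρ) ^ (1/(1+ρ)) := fun x _ =>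
      Real.rpow_nonneg (mul_nonneg (hq x) (Real.rpow_nonneg (hn0 x).le ρ)) _
    have hg : ∀ x ∈ Finset.univ, (0:ℝ) ≤ n x ^ (-(ρ/(1+ρ))) := fun x _ =>
      Real.rpow_nonneg (hn0 x).le _
    have H := Real.inner_le_Lp_mul_Lq_of_nonneg Finset.univ hpq hf hg
    have e1 : ∀ x : Fin K, (q x * n x ^ ρ) ^ (1/(1+ρ)) * n x ^ (-(ρ/(1+ρ)))
        = q x ^ (1/(1+ρ)) := by
      intro x
      have hexp : ρ * (1/(1+ρ)) + -(ρ/(1+ρ)) = 0 := by ring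
      rw [Real.mul_rpow (hq x) (Real.rpow_nonneg (hn0 x).le ρ),
        ← Real.rpow_mul (hn0 x).le, mul_assoc, ← Real.rpow_add (hn0 x), hexp,
        Real.rpow_zero, mul_one]
    have e2 : ∀ x : Fin K, ((q x * n x ^ ρ) ^ (1/(1+ρ))) ^ (1+ρ) = q x * n x ^ ρ := by
      intro x
      rw [← Real.rpow_mul (mul_nonneg (hq x) (Real.rpow_nonneg (hn0 x).le ρ)),
        one_div, inv_mul_cancel₀ h1ρ.ne', Real.rpow_one]
    have e3 : ∀ x : Fin K, (n x ^ (-(ρ/(1+ρ)))) ^ ((1+ρ)/ρ) = (n x)⁻¹ := by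
      intro x
      have hexp : -(ρ/(1+ρ)) * ((1+ρ)/ρ) = -1 := by
        field_simp
      rw [← Real.rpow_mul (hn0 x).le, hexp, Real.rpow_neg_one]
    simp only [e1, e2, e3] at H
    refine H.trans ?_
    have hsum : ∑ x, (n x)⁻¹ ≤ B := by
      simp only [hn, hB]
      have h1 : ∑ x : Fin K, (((σ x : ℕ) : ℝ) + 1)⁻¹ = ∑ i : Fin K, (((i : ℕ) : ℝ) + 1)⁻¹ :=
        Equiv.sum_comp σ fun i => (((i : ℕ) : ℝ) + 1)⁻¹
      have h2 : ∑ i : Fin K, (((i : ℕ) : ℝ) + 1)⁻¹ = (harmonic K : ℝ) := by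
        rw [harmonic, Fin.sum_univ_eq_sum_range (fun i => (((i : ℕ) : ℝ) + 1)⁻¹)]
        push_cast
        rfl
      rw [h1, h2]
      exact harmonic_le_one_add_log K
    gcongr
  have hL0 : 0 ≤ ∑ x, q x ^ (1/(1+ρ)) :=
    Finset.sum_nonneg fun x _ => Real.rpow_nonneg (hq x) _
  have step := Real.rpow_le_rpow hL0 key h1ρ.le
  refine step.trans ?_
  rw [Real.mul_rpow (Real.rpow_nonneg hA0 _) (Real.rpow_nonneg hB0.le _),
    ← Real.rpow_mul hA0, ← Real.rpow_mul hB0.le, one_div, inv_mul_cancel₀ h1ρ.ne',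
    Real.rpow_one]
  have hexp : 1/((1+ρ)/ρ) * (1+ρ) = ρ := by field_simp
  rw [hexp, mul_comm]

/-- Lower bound on the tsum appearing in the smooth Rényi entropy. -/
lemma smooth_tsum_lower {Y : Type} [Countable Y] {K : ℕ} (P Q : Fin K → Y → ℝ)
    (hQ : ∀ x y, 0 ≤ Q x y ∧ Q x y ≤ P x y)
    (hGs : Summable fun y => ∑ x, P x y)
    {α : ℝ} (hα0 : 0 < α) (hα1 : α ≤ 1)
    (hFs : Summable fun y => (∑ x, Q x y ^ α) ^ (1/α)) :
    (∑' y, ∑ x, Q x y) ≤ ∑' y, (∑ x, Q x y ^ α) ^ (1/α) := by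
  have hQsums : Summable fun y => ∑ x, Q x y :=
    Summable.of_nonneg_of_le (fun y => Finset.sum_nonneg fun x _ => (hQ x y).1)
      (fun y => Finset.sum_le_sum fun x _ => (hQ x y).2) hGs
  refine Summable.tsum_le_tsum (fun y => ?_) hQsums hFs
  have ht0 : 0 ≤ ∑ x, Q x y := Finset.sum_nonneg fun x _ => (hQ x y).1
  have h1 : (∑ x, Q x y) ^ α ≤ ∑ x, Q x y ^ α :=
    sum_rpow_le_rpow_sum' _ _ (fun x _ => (hQ x y).1) hα0 hα1
  have h2 : ((∑ x, Q x y) ^ α) ^ (1/α) ≤ (∑ x, Q x y ^ α) ^ (1/α) :=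
    Real.rpow_le_rpow (Real.rpow_nonneg ht0 _) h1 (by positivity)
  rwa [← Real.rpow_mul ht0, mul_one_div_cancel hα0.ne', Real.rpow_one] at h2

/-- Converse for guessing allowing errors: any strategy with error probability at
most `ε` has expected cost at least `(1 + log K)^{-ρ} exp(ρ H_{1/(1+ρ)}^ε(X|Y))`. -/
theorem guessing_converse {Y : Type} [Countable Y] (K : ℕ) (hK : 0 < K)
    (P : Fin K → Y → ℝ) (hP0 : ∀ x y, 0 ≤ P x y) (hP1 : ∑' y, ∑ x, P x y = 1)
    (ρ : ℝ) (hρ : 0 < ρ) (ε : ℝ) (hε : ε ∈ Set.Ico (0:ℝ) 1)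
    (σ : Y → Equiv.Perm (Fin K)) (π : Y → Fin K → ℝ)
    (hπ : ∀ y i, 0 ≤ π y i ∧ π y i ≤ 1)
    (hpe : 1 - ∑' y, ∑ x, lamG (π y) (σ y x) * P x y ≤ ε) :
    (1 + Real.log K) ^ (-ρ) * Real.exp (ρ * condSmoothRenyi P (1 / (1 + ρ)) ε) ≤
      ∑' y, ∑ x, lamG (π y) (σ y x) * P x y * (((σ y x : ℕ) : ℝ) + 1) ^ ρ := by
  obtain ⟨hε0, hε1⟩ := hε
  have h1ρ : (0:ℝ) < 1 + ρ := by linarith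
  set α : ℝ := 1 / (1 + ρ) with hαdef
  have hα0 : 0 < α := by rw [hαdef]; positivity
  have hα1 : α < 1 := by rw [hαdef, div_lt_one h1ρ]; linarith
  have hc : α / (1 - α) = 1 / ρ := by
    rw [hαdef]
    field_simp
    rw [add_sub_cancel_left]
    exact div_self hρ.ne'
  set B : ℝ := 1 + Real.log K with hB
  have hB1 : 1 ≤ B := by
    have : 0 ≤ Real.log K := Real.log_nonneg (by exact_mod_cast hK)
    simp only [hB]; linarith
  have hB0 : (0:ℝ) < B := by linarith
  have hBρ : (0:ℝ) < B ^ ρ := Real.rpow_pos_of_pos hB0 ρ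
  -- the smoothed measure
  set Q : Fin K → Y → ℝ := fun x y => lamG (π y) (σ y x) * P x y with hQdef
  have hQ : ∀ x y, 0 ≤ Q x y ∧ Q x y ≤ P x y := by
    intro x y
    constructor
    · exact mul_nonneg (lamG_nonneg (hπ y) _) (hP0 x y)
    · exact mul_le_of_le_one_left (hP0 x y) (lamG_le_one (hπ y) _)
  -- summability of the marginal of P
  have hGs : Summable fun y => ∑ x, P x y := by
    by_contra h
    rw [tsum_eq_zero_of_not_summable h] at hP1
    norm_num at hP1
  -- per-y cost
  set g : Y → ℝ := fun y => ∑ x, Q x y * (((σ y x : ℕ) : ℝ) + 1) ^ ρ with hgdef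
  have hg0 : ∀ y, 0 ≤ g y := fun y =>
    Finset.sum_nonneg fun x _ => mul_nonneg (hQ x y).1 (Real.rpow_nonneg (by positivity) ρ)
  have hgle : ∀ y, g y ≤ (K:ℝ) ^ ρ * ∑ x, P x y := by
    intro y
    rw [hgdef, Finset.mul_sum]
    refine Finset.sum_le_sum fun x _ => ?_
    have hnK : (((σ y x : ℕ) : ℝ) + 1) ≤ (K:ℝ) := by
      have := (σ y x).2
      exact_mod_cast Nat.succ_le_of_lt this
    have hpow : (((σ y x : ℕ) : ℝ) + 1) ^ ρ ≤ (K:ℝ) ^ ρ :=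
      Real.rpow_le_rpow (by positivity) hnK hρ.le
    calc Q x y * (((σ y x : ℕ) : ℝ) + 1) ^ ρ ≤ P x y * (K:ℝ) ^ ρ :=
          mul_le_mul (hQ x y).2 hpow (Real.rpow_nonneg (by positivity) ρ) (hP0 x y)
      _ = (K:ℝ) ^ ρ * P x y := mul_comm _ _
  have hgs : Summable g :=
    Summable.of_nonneg_of_le hg0 hgle (hGs.mul_left _)
  -- per-y Hölder bound
  set F : Y → ℝ := fun y => (∑ x, Q x y ^ α) ^ (1/α) with hFdef
  have hF0 : ∀ y, 0 ≤ F y := fun y =>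
    Real.rpow_nonneg (Finset.sum_nonneg fun x _ => Real.rpow_nonneg (hQ x y).1 _) _
  have hFle : ∀ y, F y ≤ B ^ ρ * g y := by
    intro y
    have := arikan hK hρ (fun x => Q x y) (fun x => (hQ x y).1) (σ y)
    rw [hFdef]
    simp only [hαdef, one_div_one_div]
    exact this
  have hFs : Summable F :=
    Summable.of_nonneg_of_le hF0 hFle (hgs.mul_left _)
  -- total smoothed mass
  have hpe' : 1 - ε ≤ ∑' y, ∑ x, Q x y := by
    have : (∑' y, ∑ x, lamG (π y) (σ y x) * P x y) = ∑' y, ∑ x, Q x y := by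
      simp only [hQdef]
    rw [← this]
    linarith
  set S : ℝ := ∑' y, F y with hSdef
  have hS_ge : 1 - ε ≤ S :=
    hpe'.trans (smooth_tsum_lower P Q hQ hGs hα0 hα1.le hFs)
  have hSpos : 0 < S := lt_of_lt_of_le (by linarith) hS_ge
  -- membership and boundedness below
  have hmem : (α / (1 - α)) * Real.log S ∈
      { h : ℝ | ∃ Q : Fin K → Y → ℝ, (∀ x y, 0 ≤ Q x y ∧ Q x y ≤ P x y) ∧
        (1 - ε ≤ ∑' y, ∑ x, Q x y) ∧
        Summable (fun y => (∑ x, Q x y ^ α) ^ (1 / α)) ∧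
        h = (α / (1 - α)) * Real.log (∑' y, (∑ x, Q x y ^ α) ^ (1 / α)) } :=
    ⟨Q, hQ, hpe', hFs, rfl⟩
  have hbdd : BddBelow { h : ℝ | ∃ Q : Fin K → Y → ℝ, (∀ x y, 0 ≤ Q x y ∧ Q x y ≤ P x y) ∧
        (1 - ε ≤ ∑' y, ∑ x, Q x y) ∧
        Summable (fun y => (∑ x, Q x y ^ α) ^ (1 / α)) ∧
        h = (α / (1 - α)) * Real.log (∑' y, (∑ x, Q x y ^ α) ^ (1 / α)) } := by
    refine ⟨(1/ρ) * Real.log (1 - ε), ?_⟩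
    rintro h ⟨Q', hQ', hm', hFs', rfl⟩
    have hS' : 1 - ε ≤ ∑' y, (∑ x, Q' x y ^ α) ^ (1/α) :=
      hm'.trans (smooth_tsum_lower P Q' hQ' hGs hα0 hα1.le hFs')
    have hlog : Real.log (1 - ε) ≤ Real.log (∑' y, (∑ x, Q' x y ^ α) ^ (1/α)) :=
      Real.log_le_log (by linarith) hS'
    rw [hc]
    have h1ρ' : (0:ℝ) < 1/ρ := by positivity
    exact mul_le_mul_of_nonneg_left hlog h1ρ'.le
  have hinf : condSmoothRenyi P α ε ≤ (α / (1 - α)) * Real.log S :=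
    csInf_le hbdd hmem
  -- conclude
  have hexp : Real.exp (ρ * condSmoothRenyi P α ε) ≤ S := by
    have h1 : ρ * condSmoothRenyi P α ε ≤ ρ * ((α / (1 - α)) * Real.log S) :=
      mul_le_mul_of_nonneg_left hinf hρ.le
    have h2 : ρ * ((α / (1 - α)) * Real.log S) = Real.log S := by
      rw [hc]
      field_simp
    calc Real.exp (ρ * condSmoothRenyi P α ε)
        ≤ Real.exp (Real.log S) := by
          rw [← h2]; exact Real.exp_le_exp.2 h1
      _ = S := Real.exp_log hSpos
  have hSle : S ≤ B ^ ρ * ∑' y, g y := by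
    have := Summable.tsum_le_tsum hFle hFs (hgs.mul_left (B ^ ρ))
    rwa [tsum_mul_left] at this
  have hgoal : (∑' y, ∑ x, lamG (π y) (σ y x) * P x y * (((σ y x : ℕ) : ℝ) + 1) ^ ρ)
      = ∑' y, g y := by
    simp only [hgdef, hQdef]
  rw [hgoal]
  have hfinal : B ^ (-ρ) * S ≤ ∑' y, g y := by
    rw [Real.rpow_neg hB0.le]
    rw [inv_mul_le_iff₀ hBρ]
    exact hSle.trans_eq rfl
  calc B ^ (-ρ) * Real.exp (ρ * condSmoothRenyi P α ε)
      ≤ B ^ (-ρ) * S := by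
        have : (0:ℝ) ≤ B ^ (-ρ) := Real.rpow_nonneg hB0.le _
        exact mul_le_mul_of_nonneg_left hexp this
    _ ≤ ∑' y, g y := hfinal
end

section
/- Fix ρ > 0 and ε ∈ [0,1). Let X take values in 𝒳 = {1,...,K} and Y in a countable set 𝒴, with joint law P_{XY}. There exists a guessing strategy G = ((σ_y, π_y))_{y∈𝒴} with error probability p_e(G|X,Y) ≤ ε whose expected cost satisfies C̄_ρ(G|X,Y) ≤ exp{ ρ · H_{1/(1+ρ)}^ε(X|Y) }. -/
open Finset

namespace GuessAux

/-- partial sums -/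
noncomputable def psum (p : ℕ → ℝ) (n : ℕ) : ℝ := ∑ j ∈ Finset.range n, p j

/-- top-truncation of `p` at total mass `s` -/
noncomputable def trunc (p : ℕ → ℝ) (s : ℝ) (i : ℕ) : ℝ :=
  min (p i) (max (s - psum p i) 0)

lemma psum_mono {p : ℕ → ℝ} (hp : ∀ i, 0 ≤ p i) : Monotone (psum p) := by
  intro m n hmn
  exact Finset.sum_le_sum_of_subset_of_nonneg (Finset.range_subset_range.2 hmn)
    (fun i _ _ => hp i)

lemma psum_succ (p : ℕ → ℝ) (n : ℕ) : psum p (n + 1) = psum p n + p n :=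
  Finset.sum_range_succ _ _

lemma trunc_nonneg {p : ℕ → ℝ} (hp : ∀ i, 0 ≤ p i) (s : ℝ) (i : ℕ) :
    0 ≤ trunc p s i := le_min (hp i) (le_max_right _ _)

lemma trunc_le (p : ℕ → ℝ) (s : ℝ) (i : ℕ) : trunc p s i ≤ p i := min_le_left _ _

lemma trunc_eq {p : ℕ → ℝ} (hp : ∀ i, 0 ≤ p i) {s : ℝ} (hs : 0 ≤ s) (i : ℕ) :
    trunc p s i = min s (psum p (i + 1)) - min s (psum p i) := by
  have h1 : psum p (i + 1) = psum p i + p i := psum_succ p i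
  rcases le_total s (psum p i) with h | h
  · have : max (s - psum p i) 0 = 0 := max_eq_right (by linarith)
    rw [trunc, this, min_eq_right (hp i), min_eq_left h,
      min_eq_left (by rw [h1]; nlinarith [hp i])]
    ring
  · rcases le_total s (psum p i + p i) with h2 | h2
    · rw [trunc, max_eq_left (by linarith), min_eq_right (by linarith),
        min_eq_left (by rw [h1]; linarith), min_eq_right h]
    · rw [trunc, max_eq_left (by linarith), min_eq_left (by linarith),
        min_eq_right (by rw [h1]; linarith), min_eq_right h, h1]
      ring

lemma trunc_sum {p : ℕ → ℝ} (hp : ∀ i, 0 ≤ p i) {s : ℝ} (hs : 0 ≤ s) (n : ℕ) :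
    ∑ i ∈ Finset.range n, trunc p s i = min s (psum p n) := by
  induction n with
  | zero => simp [psum, min_eq_right hs]
  | succ n ih =>
      rw [Finset.sum_range_succ, ih, trunc_eq hp hs]
      ring

lemma trunc_antitone {p : ℕ → ℝ} (hp : ∀ i, 0 ≤ p i) (hpa : Antitone p) (s : ℝ) :
    Antitone (trunc p s) := by
  apply antitone_nat_of_succ_le
  intro n
  apply min_le_min (hpa (Nat.le_succ n))
  apply max_le_max _ le_rfl
  have := psum_mono hp (Nat.le_succ n)
  linarith

lemma trunc_tail (p : ℕ → ℝ) (s : ℝ) (i : ℕ) :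
    trunc p s (i + 1) = trunc (fun n => p (n + 1)) (s - p 0) i := by
  have : psum p (i + 1) = psum (fun n => p (n + 1)) i + p 0 := by
    simpa [psum] using Finset.sum_range_succ' p i
  simp only [trunc, this]
  congr 2
  ring

/-- subadditivity of `x ^ α` for `α ∈ (0,1]` over finite sums -/
lemma rpow_sum_le_sum_rpow {α : ℝ} (h0 : 0 < α) (h1 : α ≤ 1) {ι : Type*}
    (t : Finset ι) (f : ι → ℝ) (hf : ∀ i ∈ t, 0 ≤ f i) :
    (∑ i ∈ t, f i) ^ α ≤ ∑ i ∈ t, f i ^ α := by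
  classical
  induction t using Finset.cons_induction with
  | empty => simp [Real.zero_rpow h0.ne']
  | cons a t hat ih =>
      rw [Finset.sum_cons, Finset.sum_cons]
      have hfa : 0 ≤ f a := hf a (Finset.mem_cons_self _ _)
      have hft : 0 ≤ ∑ i ∈ t, f i :=
        Finset.sum_nonneg fun i hi => hf i (Finset.mem_cons_of_mem hi)
      have two : (f a + ∑ i ∈ t, f i) ^ α ≤ f a ^ α + (∑ i ∈ t, f i) ^ α := by
        have := NNReal.rpow_add_le_add_rpow ⟨f a, hfa⟩ ⟨∑ i ∈ t, f i, hft⟩ h0.le h1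
        exact_mod_cast this
      refine two.trans ?_
      have := ih fun i hi => hf i (Finset.mem_cons_of_mem hi)
      linarith

/-- chord-slope comparison for the concave function `x ^ α`. -/
lemma chord {α : ℝ} (h0 : 0 < α) (h1 : α < 1) {b a u v : ℝ}
    (hb : 0 ≤ b) (hba : b ≤ a) (hau : a ≤ u) (huv : u ≤ v) :
    (v ^ α - u ^ α) * (a - b) ≤ (a ^ α - b ^ α) * (v - u) := by
  rcases eq_or_lt_of_le hba with rfl | hba'
  · simp
  rcases eq_or_lt_of_le huv with rfl | huv'
  · simp
  have ha : 0 ≤ a := hb.trans hba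
  have hu : 0 ≤ u := ha.trans hau
  have hv : 0 ≤ v := hu.trans huv
  have hav : a < v := lt_of_le_of_lt hau huv'
  have hbv : b < v := hba'.trans hav
  set g : ℝ → ℝ := fun x => -(x ^ α) with hg
  have hcv : ConvexOn ℝ (Set.Ici 0) g := (Real.concaveOn_rpow h0.le h1.le).neg
  have step1 : (g a - g b) / (a - b) ≤ (g v - g b) / (v - b) :=
    hcv.secant_mono (Set.mem_Ici.2 hb) (Set.mem_Ici.2 ha) (Set.mem_Ici.2 hv)
      hba'.ne' hbv.ne' hav.le
  have step2 : (g b - g v) / (b - v) ≤ (g u - g v) / (u - v) :=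
    hcv.secant_mono (Set.mem_Ici.2 hv) (Set.mem_Ici.2 hb) (Set.mem_Ici.2 hu)
      hbv.ne huv'.ne (hba'.le.trans hau)
  have e1 : (g b - g v) / (b - v) = (g v - g b) / (v - b) := by
    rw [← neg_div_neg_eq]; ring_nf
  have e2 : (g u - g v) / (u - v) = (g v - g u) / (v - u) := by
    rw [← neg_div_neg_eq]; ring_nf
  have key : (v ^ α - u ^ α) / (v - u) ≤ (a ^ α - b ^ α) / (a - b) := by
    have h2 : (g v - g b) / (v - b) ≤ (g v - g u) / (v - u) := by
      rw [← e1, ← e2]; exact step2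
    have hcomb := step1.trans h2
    simp only [hg] at hcomb
    have h3 : -((a ^ α - b ^ α) / (a - b)) ≤ -((v ^ α - u ^ α) / (v - u)) := by
      calc -((a ^ α - b ^ α) / (a - b)) = (-(a ^ α) - -(b ^ α)) / (a - b) := by ring
        _ ≤ (-(v ^ α) - -(u ^ α)) / (v - u) := hcomb
        _ = -((v ^ α - u ^ α) / (v - u)) := by ring
    linarith
  rw [div_le_div_iff₀ (sub_pos.2 huv') (sub_pos.2 hba')] at key
  exact key


/-- Schur-type inequality: top-truncation of `p` minimizes `∑ x_i^α` among
antitone `q ≤ p` with the same total mass. -/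
lemma schur {α : ℝ} (h0 : 0 < α) (h1 : α < 1) :
    ∀ (n : ℕ) (p q : ℕ → ℝ), Antitone p → Antitone q → (∀ i, 0 ≤ q i) →
      (∀ i, q i ≤ p i) →
      ∑ i ∈ Finset.range n, (trunc p (∑ j ∈ Finset.range n, q j) i) ^ α ≤
        ∑ i ∈ Finset.range n, q i ^ α := by
  intro n
  induction n with
  | zero => intro p q _ _ _ _; simp
  | succ n ih =>
    intro p q hpa hqa hq0 hqp
    have hp0 : ∀ i, 0 ≤ p i := fun i => (hq0 i).trans (hqp i)
    set s : ℝ := ∑ j ∈ Finset.range (n + 1), q j with hs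
    have hs0 : 0 ≤ s := Finset.sum_nonneg fun j _ => hq0 j
    by_cases hsp : s ≤ p 0
    · -- all mass fits in the first slot
      have h0term : trunc p s 0 = s := by
        simp [trunc, psum, max_eq_left hs0, min_eq_right hsp]
      have hrest : ∀ i, trunc p s (i + 1) = 0 := by
        intro i
        have hp0s : p 0 ≤ psum p (i + 1) := by
          refine Finset.single_le_sum (f := p) (fun j _ => hp0 j) ?_
          simp
        have : max (s - psum p (i + 1)) 0 = 0 := max_eq_right (by linarith)
        simp [trunc, this, min_eq_right (hp0 (i + 1))]
      have hL : ∑ i ∈ Finset.range (n + 1), (trunc p s i) ^ α = s ^ α := by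
        rw [Finset.sum_range_succ']
        simp [hrest, h0term, Real.zero_rpow h0.ne']
      rw [hL]
      exact rpow_sum_le_sum_rpow h0 h1.le _ q fun i _ => hq0 i
    · push_neg at hsp
      set p' : ℕ → ℝ := fun i => p (i + 1) with hp'
      set q' : ℕ → ℝ := fun i => q (i + 1) with hq'
      set s' : ℝ := s - p 0 with hs'
      have hs'0 : 0 ≤ s' := by simp [hs']; linarith
      have hq'a : Antitone q' := fun i j hij => hqa (Nat.succ_le_succ hij)
      have hp'a : Antitone p' := fun i j hij => hpa (Nat.succ_le_succ hij)
      have hq'0 : ∀ i, 0 ≤ q' i := fun i => hq0 _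
      have hq'p' : ∀ i, q' i ≤ p' i := fun i => hqp _
      set b : ℕ → ℝ := trunc q' s' with hb
      have hb0 : ∀ i, 0 ≤ b i := trunc_nonneg hq'0 s'
      have hbq' : ∀ i, b i ≤ q' i := trunc_le q' s'
      have hba : Antitone b := trunc_antitone hq'0 hq'a s'
      have hbp' : ∀ i, b i ≤ p' i := fun i => (hbq' i).trans (hq'p' i)
      have hm : ∑ j ∈ Finset.range n, q' j = s - q 0 := by
        have := Finset.sum_range_succ' q n
        simp only [← hs] at this
        simp [hq']
        linarith
      have hs'm : s' ≤ ∑ j ∈ Finset.range n, q' j := by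
        rw [hm, hs']; have := hqp 0; linarith
      have hbsum : ∑ j ∈ Finset.range n, b j = s' := by
        rw [hb, trunc_sum hq'0 hs'0 n]
        exact min_eq_left (by simpa [psum] using hs'm)
      have hIH := ih p' b hp'a hba hb0 hbp'
      rw [hbsum] at hIH
      -- decompose LHS
      have htr0 : trunc p s 0 = p 0 := by
        simp [trunc, psum, max_eq_left hs0, min_eq_left hsp.le]
      have hLHS : ∑ i ∈ Finset.range (n + 1), (trunc p s i) ^ α =
          (p 0) ^ α + ∑ i ∈ Finset.range n, (trunc p' s' i) ^ α := by
        rw [Finset.sum_range_succ', htr0]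
        have : ∀ i, trunc p s (i + 1) = trunc p' s' i := fun i => trunc_tail p s i
        simp [this]
        ring
      have hRHS : ∑ i ∈ Finset.range (n + 1), q i ^ α =
          (q 0) ^ α + ∑ i ∈ Finset.range n, q' i ^ α := by
        rw [Finset.sum_range_succ']
        simp [hq']
        ring
      rw [hLHS, hRHS]
      have hmain : (p 0) ^ α + ∑ i ∈ Finset.range n, (b i) ^ α ≤
          (q 0) ^ α + ∑ i ∈ Finset.range n, q' i ^ α := by
        have hchord : ∀ i ∈ Finset.range n,
            ((p 0) ^ α - (q 0) ^ α) * (q' i - b i) ≤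
              ((q' i) ^ α - (b i) ^ α) * (p 0 - q 0) := by
          intro i _
          exact chord h0 h1 (hb0 i) (hbq' i) (hqa (Nat.zero_le (i + 1))) (hqp 0)
        have hsumchord := Finset.sum_le_sum hchord
        rw [← Finset.mul_sum, ← Finset.sum_mul, Finset.sum_sub_distrib, Finset.sum_sub_distrib] at hsumchord
        rw [hbsum, hm] at hsumchord
        have hdiff : s - q 0 - s' = p 0 - q 0 := by rw [hs']; ring
        rw [hdiff] at hsumchord
        rcases eq_or_lt_of_le (hqp 0) with heq | hlt
        · have hterm : ∀ i ∈ Finset.range n, (b i) ^ α ≤ (q' i) ^ α := fun i _ =>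
            Real.rpow_le_rpow (hb0 i) (hbq' i) h0.le
          have := Finset.sum_le_sum hterm
          rw [heq]
          linarith
        · have hc := (mul_le_mul_iff_of_pos_right (sub_pos.2 hlt)).1 hsumchord
          linarith
      calc (p 0) ^ α + ∑ i ∈ Finset.range n, (trunc p' s' i) ^ α
          ≤ (p 0) ^ α + ∑ i ∈ Finset.range n, (b i) ^ α := by linarith
        _ ≤ (q 0) ^ α + ∑ i ∈ Finset.range n, q' i ^ α := hmain

/-- Arikan-type bound for an antitone nonnegative cost profile. -/
lemma arikan {ρ α : ℝ} (hρ : 0 < ρ) (hα : α = 1 / (1 + ρ)) (a : ℕ → ℝ)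
    (haa : Antitone a) (ha0 : ∀ i, 0 ≤ a i) (n : ℕ) :
    ∑ i ∈ Finset.range n, a i * ((i : ℝ) + 1) ^ ρ ≤
      (∑ i ∈ Finset.range n, a i ^ α) ^ (1 / α) := by
  have h1ρ : (0:ℝ) < 1 + ρ := by linarith
  have hα0 : 0 < α := by rw [hα]; positivity
  have hαρ : α * (1 + ρ) = 1 := by rw [hα]; field_simp
  have hinv : 1 / α = 1 + ρ := by rw [hα]; field_simp
  set S : ℝ := ∑ i ∈ Finset.range n, a i ^ α with hS
  have hS0 : 0 ≤ S := Finset.sum_nonneg fun i _ => Real.rpow_nonneg (ha0 i) α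
  rcases eq_or_lt_of_le hS0 with hS0' | hSpos
  · -- S = 0 : all a i = 0 on range n
    have hz : ∀ i ∈ Finset.range n, a i ^ α = 0 := by
      intro i hi
      have := (Finset.sum_eq_zero_iff_of_nonneg
        (fun i _ => Real.rpow_nonneg (ha0 i) α)).1 hS0'.symm
      exact this i hi
    have haz : ∀ i ∈ Finset.range n, a i = 0 := by
      intro i hi
      have := hz i hi
      rcases (Real.rpow_eq_zero_iff_of_nonneg (ha0 i)).1 this with ⟨h, _⟩
      exact h
    rw [← hS0', Real.zero_rpow (by positivity), Finset.sum_congr rfl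
      (fun i hi => by rw [haz i hi, zero_mul])]
    simp
  · have hterm : ∀ i ∈ Finset.range n, a i * ((i : ℝ) + 1) ^ ρ ≤ a i ^ α * S ^ ρ := by
      intro i hi
      rcases eq_or_lt_of_le (ha0 i) with hz | hpos
      · rw [← hz, Real.zero_rpow hα0.ne', zero_mul, zero_mul]
      · have hkey : ((i : ℝ) + 1) * a i ^ α ≤ S := by
          have h1 : ((i : ℝ) + 1) * a i ^ α = ∑ j ∈ Finset.range (i + 1), a i ^ α := by
            rw [Finset.sum_const, Finset.card_range, nsmul_eq_mul]
            push_cast; ring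
          rw [h1]
          have h2 : ∑ j ∈ Finset.range (i + 1), a i ^ α ≤
              ∑ j ∈ Finset.range (i + 1), a j ^ α := by
            refine Finset.sum_le_sum fun j hj => ?_
            have hji : j ≤ i := Nat.lt_succ_iff.1 (Finset.mem_range.1 hj)
            exact Real.rpow_le_rpow (ha0 i) (haa hji) hα0.le
          refine h2.trans ?_
          refine Finset.sum_le_sum_of_subset_of_nonneg
            (Finset.range_subset_range.2 (Finset.mem_range.1 hi)) ?_
          exact fun j _ _ => Real.rpow_nonneg (ha0 j) α
        have haα : 0 < a i ^ α := Real.rpow_pos_of_pos hpos α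
        have hdiv : ((i : ℝ) + 1) ≤ S / a i ^ α := (le_div_iff₀ haα).2 hkey
        have hr : ((i : ℝ) + 1) ^ ρ ≤ (S / a i ^ α) ^ ρ :=
          Real.rpow_le_rpow (by positivity) hdiv hρ.le
        have : a i * ((i : ℝ) + 1) ^ ρ ≤ a i * (S / a i ^ α) ^ ρ :=
          mul_le_mul_of_nonneg_left hr (ha0 i)
        refine this.trans (le_of_eq ?_)
        rw [Real.div_rpow hS0 (Real.rpow_nonneg (ha0 i) α)]
        have e1 : (a i ^ α) ^ ρ = a i ^ (α * ρ) := (Real.rpow_mul (ha0 i) α ρ).symm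
        have e2 : a i ^ α * a i ^ (α * ρ) = a i := by
          rw [← Real.rpow_add hpos, show α + α * ρ = 1 by nlinarith, Real.rpow_one]
        have hne : a i ^ (α * ρ) ≠ 0 := ne_of_gt (Real.rpow_pos_of_pos hpos _)
        rw [e1, mul_div_assoc', div_eq_iff hne]
        linear_combination (-S ^ ρ) * e2
    have := Finset.sum_le_sum hterm
    rw [← Finset.sum_mul] at this
    refine this.trans (le_of_eq ?_)
    have e3 : S * S ^ ρ = S ^ (1 + ρ) := by
      nth_rewrite 1 [← Real.rpow_one S]
      exact (Real.rpow_add hSpos 1 ρ).symm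
    rw [hinv, ← hS, e3]


lemma lamG_zero {K : ℕ} (π : Fin K → ℝ) (h : 0 < K) :
    lamG π ⟨0, h⟩ = 1 - π ⟨0, h⟩ := by
  have hset : Finset.univ.filter (· ≤ (⟨0, h⟩ : Fin K)) = {⟨0, h⟩} := by
    ext a
    simp only [Finset.mem_filter, Finset.mem_univ, true_and, Finset.mem_singleton,
      Fin.le_def, Fin.ext_iff]
    omega
  rw [lamG, hset, Finset.prod_singleton]

lemma lamG_succ {K : ℕ} (π : Fin K → ℝ) (m : ℕ) (h : m + 1 < K) :
    lamG π ⟨m + 1, h⟩ = lamG π ⟨m, by omega⟩ * (1 - π ⟨m + 1, h⟩) := by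
  have hmem : (⟨m + 1, h⟩ : Fin K) ∉
      Finset.univ.filter (· ≤ (⟨m, by omega⟩ : Fin K)) := by
    simp only [Finset.mem_filter, Finset.mem_univ, true_and, Fin.le_def]
    omega
  have hset : Finset.univ.filter (· ≤ (⟨m + 1, h⟩ : Fin K)) =
      insert ⟨m + 1, h⟩ (Finset.univ.filter (· ≤ (⟨m, by omega⟩ : Fin K))) := by
    ext a
    simp only [Finset.mem_filter, Finset.mem_univ, true_and, Finset.mem_insert,
      Fin.le_def, Fin.ext_iff]
    omega
  rw [lamG, hset, Finset.prod_insert hmem, lamG, mul_comm]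

/-- any `[0,1]`-valued antitone sequence is realizable as `lamG π`. -/
lemma exists_pi {K : ℕ} (Λ : Fin K → ℝ) (h0 : ∀ i, 0 ≤ Λ i) (h1 : ∀ i, Λ i ≤ 1)
    (hanti : Antitone Λ) :
    ∃ π : Fin K → ℝ, (∀ i, 0 ≤ π i ∧ π i ≤ 1) ∧ ∀ i, lamG π i = Λ i := by
  classical
  set πf : Fin K → ℝ := fun i =>
    if (i : ℕ) = 0 then 1 - Λ i
    else (if Λ ⟨(i : ℕ) - 1, Nat.lt_of_le_of_lt (Nat.sub_le _ _) i.isLt⟩ = 0 then 1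
      else 1 - Λ i / Λ ⟨(i : ℕ) - 1, Nat.lt_of_le_of_lt (Nat.sub_le _ _) i.isLt⟩) with hπf
  refine ⟨πf, ?_, ?_⟩
  · intro i
    by_cases hi : (i : ℕ) = 0
    · simp only [hπf, if_pos hi]
      exact ⟨by linarith [h1 i], by linarith [h0 i]⟩
    · set j : Fin K := ⟨(i : ℕ) - 1, Nat.lt_of_le_of_lt (Nat.sub_le _ _) i.isLt⟩ with hj
      by_cases hz : Λ j = 0
      · have hz2 : Λ ⟨(i : ℕ) - 1, Nat.lt_of_le_of_lt (Nat.sub_le _ _) i.isLt⟩ = 0 := hz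
        simp only [hπf, if_neg hi, if_pos hz2]
        exact ⟨zero_le_one, le_rfl⟩
      · have hz2 : ¬ Λ ⟨(i : ℕ) - 1, Nat.lt_of_le_of_lt (Nat.sub_le _ _) i.isLt⟩ = 0 := hz
        simp only [hπf, if_neg hi, if_neg hz2]
        show 0 ≤ 1 - Λ i / Λ j ∧ 1 - Λ i / Λ j ≤ 1
        have hjp : 0 < Λ j := lt_of_le_of_ne (h0 j) (Ne.symm hz)
        have hji : j ≤ i := by rw [Fin.le_def]; exact Nat.sub_le _ _
        have hd0 : 0 ≤ Λ i / Λ j := div_nonneg (h0 i) hjp.le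
        have hd1 : Λ i / Λ j ≤ 1 := (div_le_one hjp).2 (hanti hji)
        exact ⟨by linarith, by linarith⟩
  · have main : ∀ m (h : m < K), lamG πf ⟨m, h⟩ = Λ ⟨m, h⟩ := by
      intro m
      induction m with
      | zero =>
          intro h
          rw [lamG_zero πf h]
          simp only [hπf, if_pos rfl]
          ring
      | succ m ih =>
          intro h
          have hm : m < K := by omega
          rw [lamG_succ πf m h, ih hm]
          have hval : ((⟨m + 1, h⟩ : Fin K) : ℕ) = m + 1 := rfl
          have hne : ((⟨m + 1, h⟩ : Fin K) : ℕ) ≠ 0 := Nat.succ_ne_zero m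
          have hidx : (⟨((⟨m + 1, h⟩ : Fin K) : ℕ) - 1,
              Nat.lt_of_le_of_lt (Nat.sub_le _ _) (⟨m + 1, h⟩ : Fin K).isLt⟩ : Fin K) =
              ⟨m, hm⟩ := by
            simp [Fin.ext_iff]
          have hle : (⟨m, hm⟩ : Fin K) ≤ ⟨m + 1, h⟩ := Fin.mk_le_mk.2 (by omega)
          by_cases hz : Λ ⟨m, hm⟩ = 0
          · simp only [hπf, if_neg hne, hidx, if_pos hz]
            have : Λ ⟨m + 1, h⟩ = 0 :=
              le_antisymm (hz ▸ hanti hle) (h0 _)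
            rw [hz, this]
            ring
          · simp only [hπf, if_neg hne, hidx, if_neg hz]
            have : (1 : ℝ) - (1 - Λ ⟨m + 1, h⟩ / Λ ⟨m, hm⟩) = Λ ⟨m + 1, h⟩ / Λ ⟨m, hm⟩ := by
              ring
            rw [this, mul_comm, div_mul_cancel₀ _ hz]
    intro i
    have := main i.val i.isLt
    simpa [Fin.eta] using this

/-- i-th largest of `Q` is at most the i-th largest of `P` when `Q ≤ P`. -/
lemma sorted_le {K : ℕ} (Pv Qv : Fin K → ℝ) (hPQ : ∀ x, Qv x ≤ Pv x)
    (τ ς : Equiv.Perm (Fin K)) (hd : Antitone fun i => Pv (τ i))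
    (he : Antitone fun i => Qv (ς i)) (i : Fin K) : Qv (ς i) ≤ Pv (τ i) := by
  by_contra hcon
  push_neg at hcon
  have hstep : ∀ j : Fin K, j ≤ i → τ.symm (ς j) < i := by
    intro j hj
    by_contra hge
    push_neg at hge
    have h1 : Qv (ς i) ≤ Qv (ς j) := he hj
    have h2 : Qv (ς j) ≤ Pv (ς j) := hPQ _
    have h3 : Pv (ς j) = Pv (τ (τ.symm (ς j))) := by rw [Equiv.apply_symm_apply]
    have h4 : Pv (τ (τ.symm (ς j))) ≤ Pv (τ i) := hd hge
    rw [h3] at h2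
    linarith
  have hsub : (Finset.Iic i).image (fun j => τ.symm (ς j)) ⊆ Finset.Iio i := by
    intro x hx
    rcases Finset.mem_image.1 hx with ⟨j, hj, rfl⟩
    exact Finset.mem_Iio.2 (hstep j (Finset.mem_Iic.1 hj))
  have hinj : Function.Injective (fun j => τ.symm (ς j)) :=
    fun x y hxy => ς.injective (τ.symm.injective hxy)
  have hcard := Finset.card_le_card hsub
  rw [Finset.card_image_of_injective _ hinj, Fin.card_Iic, Fin.card_Iio] at hcard
  omega

/-- extend a `Fin K`-indexed vector to `ℕ` by zero. -/
noncomputable def extz {K : ℕ} (f : Fin K → ℝ) : ℕ → ℝ :=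
  fun n => if h : n < K then f ⟨n, h⟩ else 0

lemma extz_nonneg {K : ℕ} {f : Fin K → ℝ} (h0 : ∀ i, 0 ≤ f i) (n : ℕ) :
    0 ≤ extz f n := by
  unfold extz; split
  · exact h0 _
  · exact le_rfl

lemma extz_antitone {K : ℕ} {f : Fin K → ℝ} (hf : Antitone f) (h0 : ∀ i, 0 ≤ f i) :
    Antitone (extz f) := by
  intro m n hmn
  unfold extz
  by_cases hn : n < K
  · have hm : m < K := lt_of_le_of_lt hmn hn
    rw [dif_pos hn, dif_pos hm]
    exact hf (Fin.mk_le_mk.2 hmn)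
  · rw [dif_neg hn]
    split
    · exact h0 _
    · exact le_rfl

lemma extz_le {K : ℕ} {f g : Fin K → ℝ} (h : ∀ i, f i ≤ g i) (n : ℕ) :
    extz f n ≤ extz g n := by
  unfold extz; split
  · exact h _
  · exact le_rfl

lemma sum_extz {K : ℕ} (f : Fin K → ℝ) :
    ∑ m ∈ Finset.range K, extz f m = ∑ i : Fin K, f i := by
  rw [← Fin.sum_univ_eq_sum_range (extz f) K]
  refine Finset.sum_congr rfl fun i _ => ?_
  unfold extz
  rw [dif_pos i.isLt]

lemma sum_extz_comp {K : ℕ} (f : Fin K → ℝ) (g : ℝ → ℝ) (hg : g 0 = 0) :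
    ∑ m ∈ Finset.range K, g (extz f m) = ∑ i : Fin K, g (f i) := by
  rw [← Fin.sum_univ_eq_sum_range (fun m => g (extz f m)) K]
  refine Finset.sum_congr rfl fun i _ => ?_
  unfold extz
  rw [dif_pos i.isLt]


/-- Per-`y` strategy construction: sorting + truncation at mass `∑ Qv`. -/
lemma per_y {K : ℕ} {ρ α : ℝ} (hρ : 0 < ρ) (hα : α = 1 / (1 + ρ))
    (Pv Qv : Fin K → ℝ) (hP0 : ∀ x, 0 ≤ Pv x) (hQ0 : ∀ x, 0 ≤ Qv x)
    (hQP : ∀ x, Qv x ≤ Pv x) :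
    ∃ (σ : Equiv.Perm (Fin K)) (π : Fin K → ℝ),
      (∀ i, 0 ≤ π i ∧ π i ≤ 1) ∧
      (∑ x, lamG π (σ x) * Pv x = ∑ x, Qv x) ∧
      (∑ x, lamG π (σ x) * Pv x * (((σ x : ℕ) : ℝ) + 1) ^ ρ ≤
        (∑ x, Qv x ^ α) ^ (1 / α)) := by
  classical
  have h1ρ : (0:ℝ) < 1 + ρ := by linarith
  have hα0 : 0 < α := by rw [hα]; positivity
  have hα1 : α < 1 := by
    rw [hα, div_lt_one h1ρ]; linarith
  set τ : Equiv.Perm (Fin K) := Tuple.sort (fun x => -Pv x) with hτ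
  set ς : Equiv.Perm (Fin K) := Tuple.sort (fun x => -Qv x) with hς
  have hd : Antitone fun i => Pv (τ i) := by
    intro i j hij
    have := Tuple.monotone_sort (fun x => -Pv x) hij
    simpa using this
  have he : Antitone fun i => Qv (ς i) := by
    intro i j hij
    have := Tuple.monotone_sort (fun x => -Qv x) hij
    simpa using this
  set dz : ℕ → ℝ := extz (fun i => Pv (τ i)) with hdz
  set ez : ℕ → ℝ := extz (fun i => Qv (ς i)) with hez
  have hdz0 : ∀ n, 0 ≤ dz n := extz_nonneg (fun i => hP0 _)
  have hez0 : ∀ n, 0 ≤ ez n := extz_nonneg (fun i => hQ0 _)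
  have hdza : Antitone dz := extz_antitone hd (fun i => hP0 _)
  have heza : Antitone ez := extz_antitone he (fun i => hQ0 _)
  have hezdz : ∀ n, ez n ≤ dz n :=
    extz_le (sorted_le Pv Qv hQP τ ς hd he)
  set s : ℝ := ∑ x, Qv x with hs
  have hs0 : 0 ≤ s := Finset.sum_nonneg fun x _ => hQ0 x
  have hsum_e : ∑ m ∈ Finset.range K, ez m = s := by
    rw [hez, sum_extz]
    exact Equiv.sum_comp ς Qv
  set a : ℕ → ℝ := trunc dz s with ha
  have ha0 : ∀ n, 0 ≤ a n := trunc_nonneg hdz0 s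
  have hale : ∀ n, a n ≤ dz n := trunc_le dz s
  have haa : Antitone a := trunc_antitone hdz0 hdza s
  have hsPd : s ≤ psum dz K := by
    rw [psum, hdz, sum_extz]
    have h1 : s = ∑ i : Fin K, Qv (ς i) := (Equiv.sum_comp ς Qv).symm
    rw [h1]
    exact Finset.sum_le_sum fun i _ => sorted_le Pv Qv hQP τ ς hd he i
  have hasum : ∑ m ∈ Finset.range K, a m = s := by
    rw [ha, trunc_sum hdz0 hs0 K, min_eq_left hsPd]
  set Λ : Fin K → ℝ := fun i => if dz i.val = 0 then 0 else a i.val / dz i.val with hΛ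
  have hΛ0 : ∀ i, 0 ≤ Λ i := by
    intro i
    simp only [hΛ]
    split
    · exact le_rfl
    · exact div_nonneg (ha0 _) (hdz0 _)
  have hΛ1 : ∀ i, Λ i ≤ 1 := by
    intro i
    simp only [hΛ]
    split
    · exact zero_le_one
    · rename_i hne
      have : 0 < dz i.val := lt_of_le_of_ne (hdz0 _) (Ne.symm hne)
      exact (div_le_one this).2 (hale _)
  have hΛd : ∀ i : Fin K, Λ i * dz i.val = a i.val := by
    intro i
    simp only [hΛ]
    split
    · rename_i hzz
      have haz : a i.val = 0 := le_antisymm (hzz ▸ hale i.val) (ha0 _)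
      rw [zero_mul]
      exact haz.symm
    · rename_i hne
      exact div_mul_cancel₀ _ hne
  have hΛa : Antitone Λ := by
    intro i j hij
    by_cases hdj : dz j.val = 0
    · have : Λ j = 0 := by rw [hΛ]; exact if_pos hdj
      rw [this]; exact hΛ0 i
    · by_cases hij' : i.val = j.val
      · have : i = j := Fin.ext hij'
        rw [this]
      · have hlt : i.val < j.val := lt_of_le_of_ne hij hij'
        by_cases hfull : a i.val = dz i.val
        · -- Λ i = 1
          have hdi : dz i.val ≠ 0 := by
            intro hzz
            exact hdj (le_antisymm (hzz ▸ hdza hij) (hdz0 _))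
          have : Λ i = 1 := by
            simp only [hΛ]; rw [if_neg hdi, hfull, div_self hdi]
          rw [this]; exact hΛ1 j
        · -- a i < dz i forces a j = 0
          have hlt2 : a i.val < dz i.val := lt_of_le_of_ne (hale _) hfull
          have hmaxlt : max (s - psum dz i.val) 0 < dz i.val := by
            by_contra hge
            push_neg at hge
            have : a i.val = dz i.val := by
              rw [ha, trunc, min_eq_left hge]
            exact hfull this
          have hneg : s - psum dz (i.val + 1) < 0 := by
            have := le_max_left (s - psum dz i.val) 0
            rw [psum_succ]
            linarith [hmaxlt, le_max_left (s - psum dz i.val) (0:ℝ)]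
          have hmono : psum dz (i.val + 1) ≤ psum dz j.val :=
            psum_mono hdz0 hlt
          have hazj : a j.val = 0 := by
            rw [ha, trunc, max_eq_right (by linarith), min_eq_right (hdz0 _)]
          have : Λ j = 0 := by
            simp only [hΛ]; rw [if_neg hdj, hazj, zero_div]
          rw [this]
          exact hΛ0 i
  obtain ⟨π, hπb, hπΛ⟩ := exists_pi Λ hΛ0 hΛ1 hΛa
  set σ : Equiv.Perm (Fin K) := τ.symm with hσ
  have hterm : ∀ i : Fin K, lamG π i * Pv (τ i) = a i.val := by
    intro i
    rw [hπΛ i]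
    have : Pv (τ i) = dz i.val := by
      rw [hdz]; unfold extz; rw [dif_pos i.isLt]
    rw [this]
    exact hΛd i
  refine ⟨σ, π, hπb, ?_, ?_⟩
  · have h1 : ∑ x, lamG π (σ x) * Pv x =
        ∑ x, (fun i => lamG π i * Pv (τ i)) (σ x) := by
      refine Finset.sum_congr rfl fun x _ => ?_
      simp only [hσ, Equiv.apply_symm_apply]
    rw [h1, Equiv.sum_comp σ (fun i => lamG π i * Pv (τ i))]
    rw [Finset.sum_congr rfl fun i _ => hterm i]
    rw [Fin.sum_univ_eq_sum_range (fun m => a m) K, hasum]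
  · have h1 : ∑ x, lamG π (σ x) * Pv x * (((σ x : ℕ) : ℝ) + 1) ^ ρ =
        ∑ x, (fun i => lamG π i * Pv (τ i) * (((i : ℕ) : ℝ) + 1) ^ ρ) (σ x) := by
      refine Finset.sum_congr rfl fun x _ => ?_
      simp only [hσ, Equiv.apply_symm_apply]
    rw [h1, Equiv.sum_comp σ (fun i => lamG π i * Pv (τ i) * (((i : ℕ) : ℝ) + 1) ^ ρ)]
    rw [Finset.sum_congr rfl fun (i : Fin K) (_ : i ∈ Finset.univ) => by rw [hterm i]]
    rw [Fin.sum_univ_eq_sum_range (fun m => a m * ((m : ℝ) + 1) ^ ρ) K]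
    have step1 := arikan hρ hα a haa ha0 K
    refine step1.trans ?_
    have step2 : ∑ m ∈ Finset.range K, a m ^ α ≤ ∑ m ∈ Finset.range K, ez m ^ α := by
      have := schur hα0 hα1 K dz ez hdza heza hez0 hezdz
      rw [hsum_e] at this
      exact this
    have step3 : (∑ m ∈ Finset.range K, a m ^ α) ^ (1 / α) ≤
        (∑ m ∈ Finset.range K, ez m ^ α) ^ (1 / α) :=
      Real.rpow_le_rpow (Finset.sum_nonneg fun m _ => Real.rpow_nonneg (ha0 m) α)
        step2 (by positivity)
    refine step3.trans (le_of_eq ?_)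
    congr 1
    rw [hez, sum_extz_comp (fun i => Qv (ς i)) (fun t => t ^ α) (Real.zero_rpow hα0.ne')]
    exact Equiv.sum_comp ς (fun x => Qv x ^ α)

end GuessAux


open GuessAux

/-- Achievability for guessing allowing errors: there is a strategy with error
probability at most `ε` and expected cost at most `exp(ρ H_{1/(1+ρ)}^ε(X|Y))`. -/
theorem guessing_achievability {Y : Type} [Countable Y] (K : ℕ) (hK : 0 < K)
    (P : Fin K → Y → ℝ) (hP0 : ∀ x y, 0 ≤ P x y) (hP1 : ∑' y, ∑ x, P x y = 1)
    (ρ : ℝ) (hρ : 0 < ρ) (ε : ℝ) (hε : ε ∈ Set.Ico (0:ℝ) 1) :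
    ∃ (σ : Y → Equiv.Perm (Fin K)) (π : Y → Fin K → ℝ),
      (∀ y i, 0 ≤ π y i ∧ π y i ≤ 1) ∧
      1 - ∑' y, ∑ x, lamG (π y) (σ y x) * P x y ≤ ε ∧
      ∑' y, ∑ x, lamG (π y) (σ y x) * P x y * (((σ y x : ℕ) : ℝ) + 1) ^ ρ ≤
        Real.exp (ρ * condSmoothRenyi P (1 / (1 + ρ)) ε) := by
  classical
  obtain ⟨hε0, hε1⟩ := hε
  have h1ρ : (0:ℝ) < 1 + ρ := by linarith
  set α : ℝ := 1 / (1 + ρ) with hαdef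
  have hα0 : 0 < α := by rw [hαdef]; positivity
  have hα1 : α < 1 := by rw [hαdef, div_lt_one h1ρ]; linarith
  -- marginal mass on `y` and its summability
  set M : Y → ℝ := fun y => ∑ x, P x y with hM
  have hM0 : ∀ y, 0 ≤ M y := fun y => Finset.sum_nonneg fun x _ => hP0 x y
  have hMsum : Summable M := by
    by_contra hns
    rw [tsum_eq_zero_of_not_summable hns] at hP1
    norm_num at hP1
  -- clamped mass and objective
  set cl : (Fin K → Y → ℝ) → Fin K → Y → ℝ :=
    fun Q x y => min (max (Q x y) 0) (P x y) with hcl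
  have hcl_id : ∀ Q : Fin K → Y → ℝ, (∀ x y, 0 ≤ Q x y ∧ Q x y ≤ P x y) →
      ∀ x y, cl Q x y = Q x y := by
    intro Q h x y
    simp only [hcl]
    rw [max_eq_left (h x y).1, min_eq_left (h x y).2]
  have hcl_mem : ∀ Q x y, 0 ≤ cl Q x y ∧ cl Q x y ≤ P x y := by
    intro Q x y
    constructor
    · exact le_min (le_max_right _ _) (hP0 x y)
    · exact min_le_right _ _
  set mt : (Fin K → Y → ℝ) → Y → ℝ := fun Q y => ∑ x, cl Q x y with hmt
  set ft : (Fin K → Y → ℝ) → Y → ℝ := fun Q y => (∑ x, cl Q x y ^ α) ^ (1 / α) with hft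
  have hcl_cont : ∀ x y, Continuous fun Q : Fin K → Y → ℝ => cl Q x y := fun x y =>
    (((continuous_apply y).comp (continuous_apply x)).max continuous_const).min
      continuous_const
  have hmt_cont : ∀ y, Continuous fun Q => mt Q y := fun y =>
    continuous_finset_sum _ fun x _ => hcl_cont x y
  have hft_cont : ∀ y, Continuous fun Q => ft Q y := by
    intro y
    apply Continuous.rpow_const
    · exact continuous_finset_sum _ fun x _ =>
        (hcl_cont x y).rpow_const fun Q => Or.inr hα0.le
    · intro Q; right; positivity
  have hmt_nonneg : ∀ Q y, 0 ≤ mt Q y := fun Q y =>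
    Finset.sum_nonneg fun x _ => (hcl_mem Q x y).1
  have hmt_le : ∀ Q y, mt Q y ≤ M y := fun Q y =>
    Finset.sum_le_sum fun x _ => (hcl_mem Q x y).2
  have hmass_cont : Continuous fun Q => ∑' y, mt Q y := by
    refine continuous_tsum hmt_cont hMsum ?_
    intro y Q
    rw [Real.norm_eq_abs, abs_of_nonneg (hmt_nonneg Q y)]
    exact hmt_le Q y
  set u : Y → ℝ := fun y => (K : ℝ) ^ ((1:ℝ) / α) * M y with hu
  have husum : Summable u := hMsum.mul_left _
  have hft_nonneg : ∀ Q y, 0 ≤ ft Q y := fun Q y =>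
    Real.rpow_nonneg (Finset.sum_nonneg fun x _ =>
      Real.rpow_nonneg (hcl_mem Q x y).1 α) _
  have hft_le : ∀ Q y, ft Q y ≤ u y := by
    intro Q y
    have hPM : ∀ x : Fin K, P x y ≤ M y := fun x =>
      Finset.single_le_sum (f := fun x => P x y) (fun x _ => hP0 x y)
        (Finset.mem_univ x)
    have h1 : ∑ x, cl Q x y ^ α ≤ ∑ _x : Fin K, M y ^ α :=
      Finset.sum_le_sum fun x _ => Real.rpow_le_rpow (hcl_mem Q x y).1
        (le_trans (hcl_mem Q x y).2 (hPM x)) hα0.le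
    have h2 : ∑ _x : Fin K, M y ^ α = (K : ℝ) * M y ^ α := by
      rw [Finset.sum_const, Finset.card_univ, Fintype.card_fin, nsmul_eq_mul]
    have h3 : ft Q y ≤ ((K : ℝ) * M y ^ α) ^ ((1:ℝ) / α) := by
      simp only [hft]
      exact Real.rpow_le_rpow (Finset.sum_nonneg fun x _ =>
        Real.rpow_nonneg (hcl_mem Q x y).1 α) (h1.trans_eq h2) (by positivity)
    refine h3.trans (le_of_eq ?_)
    rw [Real.mul_rpow (by positivity) (Real.rpow_nonneg (hM0 y) α),
      ← Real.rpow_mul (hM0 y), mul_one_div, div_self hα0.ne', Real.rpow_one]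
  have hobj_cont : Continuous fun Q => ∑' y, ft Q y := by
    refine continuous_tsum hft_cont husum ?_
    intro y Q
    rw [Real.norm_eq_abs, abs_of_nonneg (hft_nonneg Q y)]
    exact hft_le Q y
  -- compact feasible set and minimizer
  set cube : Set (Fin K → Y → ℝ) :=
    Set.pi Set.univ fun x => Set.pi Set.univ fun y => Set.Icc 0 (P x y) with hcube
  have hcube_mem : ∀ Q, Q ∈ cube ↔ ∀ x y, 0 ≤ Q x y ∧ Q x y ≤ P x y := by
    intro Q
    simp only [hcube, Set.mem_pi, Set.mem_univ, forall_true_left, Set.mem_Icc,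
      true_implies]
  have hcube_cpt : IsCompact cube :=
    isCompact_univ_pi fun x => isCompact_univ_pi fun y => isCompact_Icc
  set Feas : Set (Fin K → Y → ℝ) := cube ∩ {Q | 1 - ε ≤ ∑' y, mt Q y} with hFeas
  have hFc : IsCompact Feas :=
    hcube_cpt.inter_right (isClosed_le continuous_const hmass_cont)
  have hPmem : P ∈ Feas := by
    constructor
    · exact (hcube_mem P).2 fun x y => ⟨hP0 x y, le_rfl⟩
    · show 1 - ε ≤ ∑' y, mt P y
      have : ∀ y, mt P y = ∑ x, P x y := by
        intro y
        exact Finset.sum_congr rfl fun x _ =>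
          hcl_id P (fun x y => ⟨hP0 x y, le_rfl⟩) x y
      rw [tsum_congr this, hP1]
      linarith
  obtain ⟨Qs, hQsF, hQsmin⟩ :=
    hFc.exists_isMinOn ⟨P, hPmem⟩ hobj_cont.continuousOn
  have hQs : ∀ x y, 0 ≤ Qs x y ∧ Qs x y ≤ P x y := (hcube_mem Qs).1 hQsF.1
  have hclQs : ∀ x y, cl Qs x y = Qs x y := hcl_id Qs hQs
  -- per-y strategies
  have hy : ∀ y, ∃ (σ : Equiv.Perm (Fin K)) (π : Fin K → ℝ),
      (∀ i, 0 ≤ π i ∧ π i ≤ 1) ∧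
      (∑ x, lamG π (σ x) * P x y = ∑ x, Qs x y) ∧
      (∑ x, lamG π (σ x) * P x y * (((σ x : ℕ) : ℝ) + 1) ^ ρ ≤
        (∑ x, Qs x y ^ α) ^ (1 / α)) := by
    intro y
    exact per_y hρ hαdef (fun x => P x y) (fun x => Qs x y)
      (fun x => hP0 x y) (fun x => (hQs x y).1) (fun x => (hQs x y).2)
  choose σ π hπb herr hcost using hy
  have hQsmass : ∀ y, mt Qs y = ∑ x, Qs x y := fun y =>
    Finset.sum_congr rfl fun x _ => hclQs x y
  refine ⟨σ, π, hπb, ?_, ?_⟩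
  · -- error probability
    rw [tsum_congr herr, ← tsum_congr hQsmass]
    have := hQsF.2
    simp only [Set.mem_setOf_eq] at this
    linarith
  · -- expected cost
    have hftQs : ∀ y, ft Qs y = (∑ x, Qs x y ^ α) ^ (1 / α) := by
      intro y
      simp only [hft]
      congr 1
      exact Finset.sum_congr rfl fun x _ => by rw [hclQs x y]
    set C : Y → ℝ := fun y =>
      ∑ x, lamG (π y) (σ y x) * P x y * (((σ y x : ℕ) : ℝ) + 1) ^ ρ with hC
    have hC_le : ∀ y, C y ≤ ft Qs y := by
      intro y
      rw [hftQs y]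
      exact hcost y
    have hlam_nonneg : ∀ y (i : Fin K), 0 ≤ lamG (π y) i := by
      intro y i
      unfold lamG
      exact Finset.prod_nonneg fun j _ => by linarith [(hπb y j).2]
    have hC0 : ∀ y, 0 ≤ C y := by
      intro y
      exact Finset.sum_nonneg fun x _ => by
        have h1 := hlam_nonneg y (σ y x)
        have h2 := hP0 x y
        positivity
    have hftQs_sum : Summable fun y => ft Qs y :=
      Summable.of_nonneg_of_le (hft_nonneg Qs) (hft_le Qs) husum
    have hCsum : Summable C := Summable.of_nonneg_of_le hC0 hC_le hftQs_sum
    have hcost_tsum : ∑' y, C y ≤ ∑' y, ft Qs y :=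
      Summable.tsum_le_tsum hC_le hCsum hftQs_sum
    refine hcost_tsum.trans ?_
    -- compare with every element of the entropy set
    set Sset : Set ℝ := { h : ℝ | ∃ Q : Fin K → Y → ℝ,
      (∀ x y, 0 ≤ Q x y ∧ Q x y ≤ P x y) ∧
      (1 - ε ≤ ∑' y, ∑ x, Q x y) ∧
      (Summable fun y => (∑ x, Q x y ^ α) ^ (1 / α)) ∧
      h = (α / (1 - α)) * Real.log (∑' y, (∑ x, Q x y ^ α) ^ (1 / α)) } with hSset
    have hSR : condSmoothRenyi P (1 / (1 + ρ)) ε = sInf Sset := rfl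
    have hSne : Sset.Nonempty := by
      refine ⟨(α / (1 - α)) * Real.log (∑' y, (∑ x, P x y ^ α) ^ (1 / α)),
        P, fun x y => ⟨hP0 x y, le_rfl⟩, by rw [hP1]; linarith, ?_, rfl⟩
      have hfun : (fun y => (∑ x, P x y ^ α) ^ (1 / α)) = fun y => ft P y := by
        funext y
        simp only [hft]
        congr 1
        exact Finset.sum_congr rfl fun x _ => by
          rw [hcl_id P (fun x y => ⟨hP0 x y, le_rfl⟩) x y]
      rw [hfun]
      exact Summable.of_nonneg_of_le (hft_nonneg P) (hft_le P) husum
    have hclaim : ∀ h ∈ Sset, ∑' y, ft Qs y ≤ Real.exp (ρ * h) := by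
      rintro h ⟨Q, hQ1, hQ2, hQ3, rfl⟩
      have hQFeas : Q ∈ Feas := by
        constructor
        · exact (hcube_mem Q).2 hQ1
        · show 1 - ε ≤ ∑' y, mt Q y
          have : ∀ y, mt Q y = ∑ x, Q x y := fun y =>
            Finset.sum_congr rfl fun x _ => hcl_id Q hQ1 x y
          rw [tsum_congr this]
          exact hQ2
      have hminQ : ∑' y, ft Qs y ≤ ∑' y, ft Q y := hQsmin hQFeas
      have hftQ : ∀ y, ft Q y = (∑ x, Q x y ^ α) ^ (1 / α) := by
        intro y
        simp only [hft]
        congr 1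
        exact Finset.sum_congr rfl fun x _ => by rw [hcl_id Q hQ1 x y]
      set FQ : ℝ := ∑' y, (∑ x, Q x y ^ α) ^ (1 / α) with hFQ
      have hmassFQ : ∀ y, ∑ x, Q x y ≤ (∑ x, Q x y ^ α) ^ (1 / α) := by
        intro y
        have h1 : (∑ x, Q x y) ^ α ≤ ∑ x, Q x y ^ α :=
          rpow_sum_le_sum_rpow hα0 hα1.le Finset.univ _ fun x _ => (hQ1 x y).1
        have h2 : ∑ x, Q x y = ((∑ x, Q x y) ^ α) ^ ((1:ℝ)/α) := by
          rw [← Real.rpow_mul (Finset.sum_nonneg fun x _ => (hQ1 x y).1),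
            mul_one_div, div_self hα0.ne', Real.rpow_one]
        rw [h2]
        exact Real.rpow_le_rpow (Real.rpow_nonneg
          (Finset.sum_nonneg fun x _ => (hQ1 x y).1) α) h1 (by positivity)
      have hQmass_sum : Summable fun y => ∑ x, Q x y := by
        refine Summable.of_nonneg_of_le
          (fun y => Finset.sum_nonneg fun x _ => (hQ1 x y).1)
          (fun y => Finset.sum_le_sum fun x _ => (hQ1 x y).2) hMsum
      have hmassFQ2 : 1 - ε ≤ FQ :=
        hQ2.trans (Summable.tsum_le_tsum hmassFQ hQmass_sum hQ3)
      have hFQpos : 0 < FQ := lt_of_lt_of_le (by linarith) hmassFQ2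
      have hcoef : ρ * (α / (1 - α)) = 1 := by
        rw [hαdef]
        field_simp
        rw [add_sub_cancel_left, div_self hρ.ne']
      have hexp : Real.exp (ρ * ((α / (1 - α)) * Real.log FQ)) = FQ := by
        rw [← mul_assoc, hcoef, one_mul, Real.exp_log hFQpos]
      rw [hexp]
      refine hminQ.trans (le_of_eq ?_)
      exact tsum_congr hftQ
    rw [hSR]
    by_cases hX : 0 < ∑' y, ft Qs y
    · have hlog : ∀ h ∈ Sset, Real.log (∑' y, ft Qs y) / ρ ≤ h := by
        intro h hh
        rw [div_le_iff₀ hρ, mul_comm]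
        exact (Real.log_le_iff_le_exp hX).2 (hclaim h hh)
      have hsinf := le_csInf hSne hlog
      calc ∑' y, ft Qs y = Real.exp (Real.log (∑' y, ft Qs y)) :=
            (Real.exp_log hX).symm
        _ ≤ Real.exp (ρ * sInf Sset) := by
            apply Real.exp_le_exp.2
            rw [div_le_iff₀ hρ] at hsinf
            linarith
    · push_neg at hX
      exact hX.trans (Real.exp_pos _).le
end

section
/- Let ρ > 0 and let Q be a subprobability distribution on a countable set 𝒜 with Q(x) > 0 for x ∈ 𝒜. Among all length functions ℓ : 𝒜 → ℝ_{≥0} satisfying the Kraft-type constraint ∑_{x ∈ 𝒜} exp(−ℓ(x)) ≤ 1, the quantity ∑_{x ∈ 𝒜} Q(x) exp(ρ ℓ(x)) is minimized by ℓ*(x) = −log( Q(x)^{1/(1+ρ)} / ∑_{x'} Q(x')^{1/(1+ρ)} ), and the minimum value equals ( ∑_{x ∈ 𝒜} Q(x)^{1/(1+ρ)} )^{1+ρ}. -/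
open Real

/-- Exact solution of the exponential-moment length optimization: among
nonnegative length functions satisfying the Kraft constraint `∑ exp(-ℓ x) ≤ 1`,
the tilted lengths `ℓ*(x) = -log(Q x^{1/(1+ρ)} / S)` (with
`S = ∑ Q x^{1/(1+ρ)}`) are feasible, achieve the value `S^{1+ρ}`, and minimize
`∑ Q x * exp(ρ ℓ x)`. -/
theorem length_optimization {A : Type} [Countable A]
    (ρ : ℝ) (hρ : 0 < ρ) (Q : A → ℝ) (hQpos : ∀ x, 0 < Q x)
    (hQsum : Summable Q) (hQsub : ∑' x, Q x ≤ 1)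
    (hQpow : Summable (fun x => Q x ^ (1 / (1 + ρ)))) :
    (∀ x, 0 ≤ -Real.log (Q x ^ (1 / (1 + ρ)) / ∑' x', Q x' ^ (1 / (1 + ρ)))) ∧
    (∑' x, Real.exp (-(-Real.log (Q x ^ (1 / (1 + ρ)) / ∑' x', Q x' ^ (1 / (1 + ρ))))) ≤ 1) ∧
    (∑' x, Q x * Real.exp (ρ *
        (-Real.log (Q x ^ (1 / (1 + ρ)) / ∑' x', Q x' ^ (1 / (1 + ρ))))) =
      (∑' x, Q x ^ (1 / (1 + ρ))) ^ (1 + ρ)) ∧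
    (∀ l : A → ℝ, (∀ x, 0 ≤ l x) →
      Summable (fun x => Real.exp (-(l x))) → (∑' x, Real.exp (-(l x))) ≤ 1 →
      Summable (fun x => Q x * Real.exp (ρ * l x)) →
      (∑' x, Q x ^ (1 / (1 + ρ))) ^ (1 + ρ) ≤ ∑' x, Q x * Real.exp (ρ * l x)) := by
  have h1ρ : (0:ℝ) < 1 + ρ := by linarith
  have h1ρ' : (1 + ρ) ≠ 0 := h1ρ.ne'
  rcases isEmpty_or_nonempty A with hA | hA
  · refine ⟨fun x => (IsEmpty.false x).elim, ?_, ?_, ?_⟩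
    · rw [tsum_empty]; norm_num
    · rw [tsum_empty, tsum_empty, Real.zero_rpow h1ρ']
    · intro l _ _ _ _
      rw [tsum_empty, tsum_empty, Real.zero_rpow h1ρ']
  set α : ℝ := 1 / (1 + ρ) with hα
  have hα0 : 0 < α := by positivity
  have hα1 : α * (1 + ρ) = 1 := by rw [hα]; field_simp
  set S : ℝ := ∑' x, Q x ^ α with hS
  have hterm : ∀ x, 0 < Q x ^ α := fun x => rpow_pos_of_pos (hQpos x) α
  have hle : ∀ x, Q x ^ α ≤ S := fun x =>
    hQpow.le_tsum x (fun i _ => (hterm i).le)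
  have hSpos : 0 < S := lt_of_lt_of_le (hterm (Classical.arbitrary A)) (hle _)
  have hrpos : ∀ x, 0 < Q x ^ α / S := fun x => div_pos (hterm x) hSpos
  have hrle : ∀ x, Q x ^ α / S ≤ 1 := fun x => (div_le_one hSpos).2 (hle x)
  refine ⟨?_, ?_, ?_, ?_⟩
  · intro x
    simpa using Real.log_nonpos (hrpos x).le (hrle x)
  · have : ∀ x, Real.exp (-(-Real.log (Q x ^ α / S))) = Q x ^ α / S := by
      intro x; rw [neg_neg, Real.exp_log (hrpos x)]
    rw [tsum_congr this, tsum_div_const, ← hS, div_self hSpos.ne']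
  · have key : ∀ x, Q x * Real.exp (ρ * -Real.log (Q x ^ α / S)) = Q x ^ α * S ^ ρ := by
      intro x
      have h1 : Real.exp (ρ * -Real.log (Q x ^ α / S)) = (Q x ^ α / S) ^ (-ρ) := by
        rw [Real.rpow_def_of_pos (hrpos x)]; ring_nf
      rw [h1, Real.div_rpow (hterm x).le hSpos.le, ← Real.rpow_mul (hQpos x).le,
        Real.rpow_neg hSpos.le, div_eq_mul_inv, inv_inv, ← mul_assoc]
      congr 1
      have e : (1:ℝ) + α * -ρ = α := by rw [hα]; field_simp; ring
      calc Q x * Q x ^ (α * -ρ) = Q x ^ ((1:ℝ) + α * -ρ) := by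
            rw [Real.rpow_add (hQpos x), Real.rpow_one]
        _ = Q x ^ α := by rw [e]
    rw [tsum_congr key, tsum_mul_right, ← hS, Real.rpow_add hSpos, Real.rpow_one]
  · intro l hl hKsum hK hlsum
    set f : A → ℝ := fun x => (Q x * Real.exp (ρ * l x)) ^ α with hf
    set g : A → ℝ := fun x => Real.exp (-(l x)) ^ (ρ * α) with hg
    have hfpos : ∀ x, 0 < Q x * Real.exp (ρ * l x) := fun x =>
      mul_pos (hQpos x) (Real.exp_pos _)
    have hpq : (1 + ρ).HolderConjugate ((1 + ρ) / ρ) := by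
      rw [Real.holderConjugate_iff]
      constructor
      · linarith
      · rw [inv_div]
        field_simp
    have hfp : ∀ x, f x ^ (1 + ρ) = Q x * Real.exp (ρ * l x) := by
      intro x
      simp only [hf]
      rw [← Real.rpow_mul (hfpos x).le, hα1, Real.rpow_one]
    have hgq : ∀ x, g x ^ ((1 + ρ) / ρ) = Real.exp (-(l x)) := by
      intro x
      simp only [hg]
      rw [← Real.rpow_mul (Real.exp_pos _).le]
      have : ρ * α * ((1 + ρ) / ρ) = 1 := by
        rw [hα]
        field_simp
      rw [this, Real.rpow_one]
    have hfg : ∀ x, f x * g x = Q x ^ α := by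
      intro x
      simp only [hf, hg]
      rw [Real.mul_rpow (hQpos x).le (Real.exp_pos _).le,
        ← Real.exp_one_rpow (ρ * l x), ← Real.exp_one_rpow (-(l x)),
        ← Real.rpow_mul (Real.exp_pos 1).le, ← Real.rpow_mul (Real.exp_pos 1).le,
        mul_assoc, ← Real.rpow_add (Real.exp_pos 1)]
      have : ρ * l x * α + -l x * (ρ * α) = 0 := by ring
      rw [this, Real.rpow_zero, mul_one]
    have hfsum : Summable fun x => f x ^ (1 + ρ) := by
      simpa only [hfp] using hlsum
    have hgsum : Summable fun x => g x ^ ((1 + ρ) / ρ) := by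
      simpa only [hgq] using hKsum
    have holder := inner_le_Lp_mul_Lq_tsum_of_nonneg hpq
      (fun x => Real.rpow_nonneg (hfpos x).le α)
      (fun x => Real.rpow_nonneg (Real.exp_pos _).le _) hfsum hgsum
    rw [tsum_congr hfg, tsum_congr hfp, tsum_congr hgq] at holder
    have hS2 : S ≤ (∑' x, Q x * Real.exp (ρ * l x)) ^ (1 / (1 + ρ)) := by
      refine holder.trans ?_
      have h2 : (∑' x, Real.exp (-(l x))) ^ (1 / ((1 + ρ) / ρ)) ≤ 1 :=
        Real.rpow_le_one (tsum_nonneg fun x => (Real.exp_pos _).le) hK (by positivity)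
      calc (∑' x, Q x * Real.exp (ρ * l x)) ^ (1 / (1 + ρ)) *
            (∑' x, Real.exp (-(l x))) ^ (1 / ((1 + ρ) / ρ))
          ≤ (∑' x, Q x * Real.exp (ρ * l x)) ^ (1 / (1 + ρ)) * 1 := by
            apply mul_le_mul_of_nonneg_left h2
            exact Real.rpow_nonneg (tsum_nonneg fun x => (hfpos x).le) _
        _ = _ := mul_one _
    calc S ^ (1 + ρ) ≤ ((∑' x, Q x * Real.exp (ρ * l x)) ^ (1 / (1 + ρ))) ^ (1 + ρ) :=
          Real.rpow_le_rpow hSpos.le hS2 h1ρ.le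
      _ = ∑' x, Q x * Real.exp (ρ * l x) := by
          rw [← Real.rpow_mul (tsum_nonneg fun x => (hfpos x).le), one_div,
            inv_mul_cancel₀ h1ρ', Real.rpow_one]
end

section
/- Let ρ > 0 and let Q(·) be a nonincreasing nonnegative sequence Q(1) ≥ Q(2) ≥ ⋯ ≥ Q(N) ≥ 0. Then ∑_{i=1}^N Q(i) · i^ρ ≤ ( ∑_{i=1}^N Q(i)^{1/(1+ρ)} )^{1+ρ}. -/
/-- Guessing achievability inequality: for a nonincreasing nonnegative sequence `Q`,
`∑ Q(i) i^ρ ≤ (∑ Q(i)^{1/(1+ρ)})^{1+ρ}`. -/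
theorem guessing_moment_bound (ρ : ℝ) (hρ : 0 < ρ) (N : ℕ) (Q : ℕ → ℝ)
    (hQ0 : ∀ i, 0 ≤ Q i) (hmono : ∀ i j, i ≤ j → j < N → Q j ≤ Q i) :
    ∑ i ∈ Finset.range N, Q i * ((i : ℝ) + 1) ^ ρ ≤
      (∑ i ∈ Finset.range N, Q i ^ (1 / (1 + ρ))) ^ (1 + ρ) := by
  set α : ℝ := 1 / (1 + ρ) with hα
  have h1ρ : (0:ℝ) < 1 + ρ := by linarith
  have hαpos : 0 < α := by positivity
  set S : ℝ := ∑ i ∈ Finset.range N, Q i ^ α with hS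
  have hSnn : 0 ≤ S := Finset.sum_nonneg fun i _ => Real.rpow_nonneg (hQ0 i) α
  -- key bound: for i < N, (i+1) * Q i ^ α ≤ S
  have key : ∀ i ∈ Finset.range N, ((i : ℝ) + 1) * Q i ^ α ≤ S := by
    intro i hi
    rw [Finset.mem_range] at hi
    have h1 : ∑ _j ∈ Finset.range (i + 1), Q i ^ α ≤
        ∑ j ∈ Finset.range (i + 1), Q j ^ α := by
      apply Finset.sum_le_sum
      intro j hj
      rw [Finset.mem_range] at hj
      exact Real.rpow_le_rpow (hQ0 i) (hmono j i (Nat.lt_succ_iff.mp hj) hi) hαpos.le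
    have h2 : ∑ j ∈ Finset.range (i + 1), Q j ^ α ≤ S := by
      apply Finset.sum_le_sum_of_subset_of_nonneg
      · exact Finset.range_subset_range.mpr hi
      · intro j _ _; exact Real.rpow_nonneg (hQ0 j) α
    have h3 : ∑ _j ∈ Finset.range (i + 1), Q i ^ α = ((i : ℝ) + 1) * Q i ^ α := by
      rw [Finset.sum_const, Finset.card_range, nsmul_eq_mul]
      push_cast; ring
    linarith
  -- per-term bound: Q i * (i+1)^ρ ≤ Q i ^ α * S ^ ρ
  have per : ∀ i ∈ Finset.range N, Q i * ((i : ℝ) + 1) ^ ρ ≤ Q i ^ α * S ^ ρ := by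
    intro i hi
    have hone : α + α * ρ = 1 := by rw [hα]; field_simp
    have heq : Q i * ((i : ℝ) + 1) ^ ρ = Q i ^ α * (((i : ℝ) + 1) * Q i ^ α) ^ ρ := by
      rw [Real.mul_rpow (by positivity) (Real.rpow_nonneg (hQ0 i) α),
        ← Real.rpow_mul (hQ0 i), show Q i ^ α * (((i:ℝ)+1)^ρ * Q i^(α*ρ)) =
          ((i:ℝ)+1)^ρ * (Q i^α * Q i^(α*ρ)) from by ring,
        ← Real.rpow_add' (hQ0 i) (by rw [hone]; exact one_ne_zero), hone, Real.rpow_one]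
      ring
    rw [heq]
    apply mul_le_mul_of_nonneg_left _ (Real.rpow_nonneg (hQ0 i) α)
    exact Real.rpow_le_rpow
      (mul_nonneg (by positivity) (Real.rpow_nonneg (hQ0 i) α)) (key i hi) hρ.le
  calc ∑ i ∈ Finset.range N, Q i * ((i : ℝ) + 1) ^ ρ
      ≤ ∑ i ∈ Finset.range N, Q i ^ α * S ^ ρ := Finset.sum_le_sum per
    _ = S * S ^ ρ := by rw [← Finset.sum_mul]
    _ = S ^ (1 + ρ) := by
        rw [Real.rpow_add' hSnn (by positivity), Real.rpow_one]
end
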